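/- arXiv:2412.15910 — 8 statements merged into one kernel-verified Lean document; each statement's English description precedes it below -/
import Mathlib

section
/- Let φ ∈ ℝ² be a nonzero vector, let A be a real symmetric 2×2 matrix, and let e ∈ ℝ² be a unit vector with ⟨e, φ⟩ = 0. Define the symmetric 3×3 matrix M with M₁₁ = 0, first row and first column (after the corner) equal to −φ, and lower-right 2×2 block equal to A. If ⟨A e, e⟩ < 0, then M is invertible and has exactly one positive eigenvalue and two negative eigenvalues (so its signature, the number of positive minus the number of negative eigenvalues, equals −1); if ⟨A e, e⟩ > 0, then M has exactly two positive and one negative eigenvalue. -/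
open scoped Matrix

lemma neg_posSemidef_of_eigs {n : Type*} [Fintype n] [DecidableEq n] {A : Matrix n n ℝ}
    (hA : A.IsHermitian) (h : ∀ i, hA.eigenvalues i ≤ 0) : (-A).PosSemidef := by
  have h2 : -A = (hA.eigenvectorUnitary : Matrix n n ℝ) *
      Matrix.diagonal (fun i => -hA.eigenvalues i) *
      (star (hA.eigenvectorUnitary : Matrix n n ℝ)) := by
    conv_lhs => rw [hA.spectral_theorem]
    rw [← Matrix.diagonal_neg, Matrix.mul_neg, Matrix.neg_mul]
    simp [Function.comp]
  rw [h2]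
  exact (Matrix.posSemidef_diagonal_iff.mpr
    (fun i => by simpa using h i)).mul_mul_conjTranspose_same _

lemma fin3_filter_card (p : Fin 3 → Prop) [DecidablePred p] :
    (Finset.univ.filter p).card =
      (if p 0 then 1 else 0) + (if p 1 then 1 else 0) + (if p 2 then 1 else 0) := by
  rw [Finset.card_filter, Fin.sum_univ_three]

/-- Signature of the bordered Hessian `M = [[0, −φᵀ], [−φ, A]]`: if
`⟨A e, e⟩ < 0` (where `e` is a unit vector orthogonal to `φ ≠ 0`), then `M` is
invertible with exactly one positive and two negative eigenvalues (signature
`−1`); if `⟨A e, e⟩ > 0`, then `M` has exactly two positive and one negative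
eigenvalue. -/
theorem stmt_5 (φ e : Fin 2 → ℝ) (A : Matrix (Fin 2) (Fin 2) ℝ)
    (hφ : φ ≠ 0) (hA : A.IsSymm)
    (he_unit : e 0 ^ 2 + e 1 ^ 2 = 1)
    (he_orth : e 0 * φ 0 + e 1 * φ 1 = 0)
    (M : Matrix (Fin 3) (Fin 3) ℝ)
    (hM : M = !![0, -φ 0, -φ 1; -φ 0, A 0 0, A 0 1; -φ 1, A 1 0, A 1 1])
    (hHerm : M.IsHermitian) :
    (e ⬝ᵥ A.mulVec e < 0 →
        IsUnit M ∧
        (Finset.univ.filter fun i => 0 < hHerm.eigenvalues i).card = 1 ∧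
        (Finset.univ.filter fun i => hHerm.eigenvalues i < 0).card = 2) ∧
    (0 < e ⬝ᵥ A.mulVec e →
        (Finset.univ.filter fun i => 0 < hHerm.eigenvalues i).card = 2 ∧
        (Finset.univ.filter fun i => hHerm.eigenvalues i < 0).card = 1) := by
  set l := hHerm.eigenvalues with hl
  -- positivity of |φ|²
  have hs : 0 < φ 0 ^ 2 + φ 1 ^ 2 := by
    have h01 : φ 0 ≠ 0 ∨ φ 1 ≠ 0 := by
      by_contra hc
      push_neg at hc
      apply hφ
      funext i
      fin_cases i
      · exact hc.1
      · exact hc.2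
    rcases h01 with h | h <;> positivity
  -- the value of the quadratic form at `(t, φ)`
  set c : ℝ := φ 0 * (A 0 0 * φ 0 + A 0 1 * φ 1) + φ 1 * (A 1 0 * φ 0 + A 1 1 * φ 1) with hc
  have hQ : ∀ t : ℝ, (![t, φ 0, φ 1]) ⬝ᵥ (M *ᵥ ![t, φ 0, φ 1])
      = -2 * t * (φ 0 ^ 2 + φ 1 ^ 2) + c := by
    intro t
    rw [hM]
    simp [dotProduct, Matrix.mulVec, Fin.sum_univ_three]
    ring
  -- determinant computation
  have hqe : e ⬝ᵥ A.mulVec e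
      = e 0 * A 0 0 * e 0 + e 0 * A 0 1 * e 1 + e 1 * A 1 0 * e 0 + e 1 * A 1 1 * e 1 := by
    simp [dotProduct, Matrix.mulVec, Fin.sum_univ_two]
    ring
  have hdet : M.det = -((φ 0 ^ 2 + φ 1 ^ 2) * (e ⬝ᵥ A.mulVec e)) := by
    have hd3 : (!![0, -φ 0, -φ 1; -φ 0, A 0 0, A 0 1; -φ 1, A 1 0, A 1 1]
        : Matrix (Fin 3) (Fin 3) ℝ).det
        = -(φ 0 * φ 0 * A 1 1) + φ 0 * φ 1 * A 0 1 + φ 1 * φ 0 * A 1 0 - φ 1 * φ 1 * A 0 0 := by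
      simp [Matrix.det_fin_three]
      ring
    rw [hM, hd3, hqe]
    linear_combination
      ((A 0 0) * (e 0 * φ 0 - e 1 * φ 1) + (A 1 1) * (e 1 * φ 1 - e 0 * φ 0)
        + (A 0 1 + A 1 0) * (e 1 * φ 0 + e 0 * φ 1)) * he_orth
      + (φ 1 ^ 2 * A 0 0 + φ 0 ^ 2 * A 1 1 - φ 0 * φ 1 * (A 0 1 + A 1 0)) * he_unit
  have hprod : l 0 * l 1 * l 2 = M.det := by
    have h := hHerm.det_eq_prod_eigenvalues
    rw [Fin.prod_univ_three] at h
    simpa using h.symm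
  -- M is not positive semidefinite nor negative semidefinite
  have hnotpos : ¬ ∀ i, 0 ≤ l i := by
    intro hp
    have hpsd := hHerm.posSemidef_iff_eigenvalues_nonneg.mpr hp
    have h2 := hpsd.dotProduct_mulVec_nonneg ![(c + 1) / (2 * (φ 0 ^ 2 + φ 1 ^ 2)), φ 0, φ 1]
    rw [star_trivial, hQ] at h2
    have hval : -2 * ((c + 1) / (2 * (φ 0 ^ 2 + φ 1 ^ 2))) * (φ 0 ^ 2 + φ 1 ^ 2) + c = -1 := by
      field_simp
      ring
    rw [hval] at h2
    linarith
  have hnotneg : ¬ ∀ i, l i ≤ 0 := by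
    intro hp
    have hpsd := neg_posSemidef_of_eigs hHerm hp
    have h2 := hpsd.dotProduct_mulVec_nonneg ![(c - 1) / (2 * (φ 0 ^ 2 + φ 1 ^ 2)), φ 0, φ 1]
    rw [star_trivial, Matrix.neg_mulVec, dotProduct_neg, hQ] at h2
    have hval : -2 * ((c - 1) / (2 * (φ 0 ^ 2 + φ 1 ^ 2))) * (φ 0 ^ 2 + φ 1 ^ 2) + c = 1 := by
      field_simp
      ring
    rw [hval] at h2
    linarith
  constructor
  · intro hq
    have hdpos : 0 < M.det := by
      rw [hdet]
      nlinarith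
    have hunit : IsUnit M := by
      rw [Matrix.isUnit_iff_isUnit_det]
      exact isUnit_iff_ne_zero.mpr (ne_of_gt hdpos)
    refine ⟨hunit, ?_⟩
    have hp : 0 < l 0 * l 1 * l 2 := hprod ▸ hdpos
    have h0 := (show l 0 ≠ 0 by intro h; rw [h] at hp; simp at hp).lt_or_gt
    have h1 := (show l 1 ≠ 0 by intro h; rw [h] at hp; simp at hp).lt_or_gt
    have h2 := (show l 2 ≠ 0 by intro h; rw [h] at hp; simp at hp).lt_or_gt
    rcases h0 with h0 | h0 <;> rcases h1 with h1 | h1 <;> rcases h2 with h2 | h2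
    · -- (−,−,−)
      exact absurd hp (asymm (mul_neg_of_pos_of_neg (mul_pos_of_neg_of_neg h0 h1) h2))
    · -- (−,−,+)
      constructor
      · norm_num [fin3_filter_card, asymm h0, asymm h1, h2]
      · norm_num [fin3_filter_card, h0, h1, asymm h2]
    · -- (−,+,−)
      constructor
      · norm_num [fin3_filter_card, asymm h0, h1, asymm h2]
      · norm_num [fin3_filter_card, h0, asymm h1, h2]
    · -- (−,+,+)
      exact absurd hp (asymm (mul_neg_of_neg_of_pos (mul_neg_of_neg_of_pos h0 h1) h2))
    · -- (+,−,−)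
      constructor
      · norm_num [fin3_filter_card, h0, asymm h1, asymm h2]
      · norm_num [fin3_filter_card, asymm h0, h1, h2]
    · -- (+,−,+)
      exact absurd hp (asymm (mul_neg_of_neg_of_pos (mul_neg_of_pos_of_neg h0 h1) h2))
    · -- (+,+,−)
      exact absurd hp (asymm (mul_neg_of_pos_of_neg (mul_pos h0 h1) h2))
    · -- (+,+,+)
      exact absurd (fun i => by fin_cases i <;>
        first | exact h0.le | exact h1.le | exact h2.le : ∀ i, 0 ≤ l i) hnotpos
  · intro hq
    have hdneg : M.det < 0 := by
      rw [hdet]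
      nlinarith
    have hp : l 0 * l 1 * l 2 < 0 := hprod ▸ hdneg
    have h0 := (show l 0 ≠ 0 by intro h; rw [h] at hp; simp at hp).lt_or_gt
    have h1 := (show l 1 ≠ 0 by intro h; rw [h] at hp; simp at hp).lt_or_gt
    have h2 := (show l 2 ≠ 0 by intro h; rw [h] at hp; simp at hp).lt_or_gt
    rcases h0 with h0 | h0 <;> rcases h1 with h1 | h1 <;> rcases h2 with h2 | h2
    · -- (−,−,−)
      exact absurd (fun i => by fin_cases i <;>
        first | exact h0.le | exact h1.le | exact h2.le : ∀ i, l i ≤ 0) hnotneg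
    · -- (−,−,+)
      exact absurd hp (asymm (mul_pos (mul_pos_of_neg_of_neg h0 h1) h2))
    · -- (−,+,−)
      exact absurd hp (asymm (mul_pos_of_neg_of_neg (mul_neg_of_neg_of_pos h0 h1) h2))
    · -- (−,+,+)
      constructor
      · norm_num [fin3_filter_card, asymm h0, h1, h2]
      · norm_num [fin3_filter_card, h0, asymm h1, asymm h2]
    · -- (+,−,−)
      exact absurd hp (asymm (mul_pos_of_neg_of_neg (mul_neg_of_pos_of_neg h0 h1) h2))
    · -- (+,−,+)
      constructor
      · norm_num [fin3_filter_card, h0, asymm h1, h2]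
      · norm_num [fin3_filter_card, asymm h0, h1, asymm h2]
    · -- (+,+,−)
      constructor
      · norm_num [fin3_filter_card, h0, h1, asymm h2]
      · norm_num [fin3_filter_card, asymm h0, asymm h1, h2]
    · -- (+,+,+)
      exact absurd hp (asymm (mul_pos (mul_pos h0 h1) h2))
end

section
/- Let I ⊆ ℝ be an open interval and α̃ ∈ I. Let H : ℝ² → ℝ and Φ : ℝ² × ℝ → ℝ be twice continuously differentiable, and let x : I → ℝ² and ν : I → ℝ be continuously differentiable with ν(α) ≠ 0 for all α ∈ I. Assume that for all α ∈ I: H(x(α)) = 0 and ∇H(x(α)) = ν(α) ∇ₓΦ(x(α), α), where ∇ₓΦ denotes the gradient of Φ in its first (ℝ²) argument. Set x̃ := x(α̃) and Q(α) := Φ(x̃, α) − Φ(x(α), α). Then: (i) Q(α̃) = 0; (ii) Q′(α) = ∂_αΦ(x̃, α) − ∂_αΦ(x(α), α) for all α ∈ I, and in particular Q′(α̃) = 0; (iii) Q is twice differentiable at α̃ and Q″(α̃) = ∇ₓ²Φ(x̃, α̃)(x′(α̃), x′(α̃)) − (1/ν(α̃)) ∇²H(x̃)(x′(α̃), x′(α̃)),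 where ∇²H and ∇ₓ²Φ denote the Hessians (of H, and of Φ in its first argument) as bilinear forms. -/
section Aux

variable {E : Type*} [NormedAddCommGroup E] [NormedSpace ℝ E]

/-- The fderiv of a slice `z ↦ Φ (z, α)` in terms of the full fderiv. -/
lemma slice_fderiv (Φ : E × ℝ → ℝ) (hΦ : Differentiable ℝ Φ) (z : E) (α : ℝ) :
    fderiv ℝ (fun w => Φ (w, α)) z
      = (fderiv ℝ Φ (z, α)).comp ((ContinuousLinearMap.id ℝ E).prod 0) := by
  have h1 : HasFDerivAt (fun w : E => (w, α))
      ((ContinuousLinearMap.id ℝ E).prod 0) z :=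
    (hasFDerivAt_id z).prodMk (hasFDerivAt_const α z)
  exact ((hΦ (z, α)).hasFDerivAt.comp z h1).fderiv

lemma slice_fderiv_apply (Φ : E × ℝ → ℝ) (hΦ : Differentiable ℝ Φ) (z : E) (α : ℝ) (v : E) :
    fderiv ℝ (fun w => Φ (w, α)) z v = fderiv ℝ Φ (z, α) (v, 0) := by
  rw [slice_fderiv Φ hΦ z α]; rfl

end Aux

/-- Derivatives of `Q(α) = Φ(x̃, α) − Φ(x(α), α)` along the tangency curve:
if `H(x(α)) = 0` and `∇H(x(α)) = ν(α) ∇ₓΦ(x(α), α)` on an open interval `I`,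
then `Q(α̃) = 0`, `Q′(α) = ∂_αΦ(x̃,α) − ∂_αΦ(x(α),α)` (so `Q′(α̃) = 0`), and
`Q″(α̃) = ∇ₓ²Φ(x̃,α̃)(x′,x′) − (1/ν(α̃)) ∇²H(x̃)(x′,x′)` with `x′ = x′(α̃)`. -/
theorem stmt_6 (I : Set ℝ) (hIopen : IsOpen I) (hIconn : I.OrdConnected)
    (αt : ℝ) (hαt : αt ∈ I)
    (H : EuclideanSpace ℝ (Fin 2) → ℝ)
    (Φ : EuclideanSpace ℝ (Fin 2) × ℝ → ℝ)
    (hH : ContDiff ℝ 2 H) (hΦ : ContDiff ℝ 2 Φ)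
    (x : ℝ → EuclideanSpace ℝ (Fin 2)) (ν : ℝ → ℝ)
    (hx : ContDiffOn ℝ 1 x I) (hν : ContDiffOn ℝ 1 ν I)
    (hνne : ∀ α ∈ I, ν α ≠ 0)
    (hH0 : ∀ α ∈ I, H (x α) = 0)
    (hgrad : ∀ α ∈ I, gradient H (x α) = ν α • gradient (fun z => Φ (z, α)) (x α)) :
    (Φ (x αt, αt) - Φ (x αt, αt) = 0) ∧
    (∀ α ∈ I, deriv (fun β => Φ (x αt, β) - Φ (x β, β)) α
        = deriv (fun β => Φ (x αt, β)) α - deriv (fun β => Φ (x α, β)) α) ∧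
    (deriv (fun β => Φ (x αt, β) - Φ (x β, β)) αt = 0) ∧
    DifferentiableAt ℝ (deriv (fun β => Φ (x αt, β) - Φ (x β, β))) αt ∧
    deriv (deriv (fun β => Φ (x αt, β) - Φ (x β, β))) αt
      = iteratedFDeriv ℝ 2 (fun z => Φ (z, αt)) (x αt) ![deriv x αt, deriv x αt]
        - (1 / ν αt) * iteratedFDeriv ℝ 2 H (x αt) ![deriv x αt, deriv x αt] := by
  classical
  have hΦd : Differentiable ℝ Φ := hΦ.differentiable (by norm_num)
  have hHd : Differentiable ℝ H := hH.differentiable (by norm_num)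
  have hF1 : ContDiff ℝ 1 (fderiv ℝ Φ) := hΦ.fderiv_right (by norm_num)
  have hFd : Differentiable ℝ (fderiv ℝ Φ) := hF1.differentiable one_ne_zero
  have hdH1 : ContDiff ℝ 1 (fderiv ℝ H) := hH.fderiv_right (by norm_num)
  have hdHd : Differentiable ℝ (fderiv ℝ H) := hdH1.differentiable one_ne_zero
  -- differentiability of x and ν
  have hxd : ∀ α ∈ I, HasDerivAt x (deriv x α) α := by
    intro α hα
    exact ((hx.differentiableOn one_ne_zero).differentiableAt (hIopen.mem_nhds hα)).hasDerivAt
  have hνd : HasDerivAt ν (deriv ν αt) αt :=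
    ((hν.differentiableOn one_ne_zero).differentiableAt (hIopen.mem_nhds hαt)).hasDerivAt
  -- from the gradient relation to an fderiv relation
  have hfd : ∀ α ∈ I, fderiv ℝ H (x α) = ν α • fderiv ℝ (fun z => Φ (z, α)) (x α) := by
    intro α hα
    have h2 := congrArg (InnerProductSpace.toDual ℝ (EuclideanSpace ℝ (Fin 2))) (hgrad α hα)
    simpa [gradient, map_smul] using h2
  -- Claim A : the tangency relation kills the x-directional derivative
  have hA : ∀ α ∈ I, fderiv ℝ Φ (x α, α) (deriv x α, 0) = 0 := by
    intro α hα
    have hHx : HasDerivAt (fun β => H (x β)) (fderiv ℝ H (x α) (deriv x α)) α :=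
      (hHd (x α)).hasFDerivAt.comp_hasDerivAt α (hxd α hα)
    have h0 : fderiv ℝ H (x α) (deriv x α) = 0 := by
      have hev : (fun β => H (x β)) =ᶠ[nhds α] fun _ => (0 : ℝ) := by
        filter_upwards [hIopen.mem_nhds hα] with β hβ using hH0 β hβ
      have h0' : HasDerivAt (fun β => H (x β)) 0 α :=
        (hasDerivAt_const α (0 : ℝ)).congr_of_eventuallyEq hev
      exact hHx.unique h0'
    have happ := DFunLike.congr_fun (hfd α hα) (deriv x α)
    rw [h0] at happ
    simp only [ContinuousLinearMap.smul_apply, smul_eq_mul] at happ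
    rw [slice_fderiv_apply Φ hΦd] at happ
    rcases mul_eq_zero.1 happ.symm with h | h
    · exact absurd h (hνne α hα)
    · exact h
  -- derivative of Q on I
  have hQ' : ∀ α ∈ I, HasDerivAt (fun β => Φ (x αt, β) - Φ (x β, β))
      (fderiv ℝ Φ (x αt, α) (0, 1) - fderiv ℝ Φ (x α, α) (0, 1)) α := by
    intro α hα
    have h1 : HasDerivAt (fun β => Φ (x αt, β)) (fderiv ℝ Φ (x αt, α) (0, 1)) α := by
      have hγ : HasDerivAt (fun β : ℝ => ((x αt, β) : EuclideanSpace ℝ (Fin 2) × ℝ))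
          ((0 : EuclideanSpace ℝ (Fin 2)), (1 : ℝ)) α :=
        (hasDerivAt_const α (x αt)).prodMk (hasDerivAt_id α)
      have := (hΦd (x αt, α)).hasFDerivAt.comp_hasDerivAt α hγ
      simpa [Function.comp_def] using this
    have h2 : HasDerivAt (fun β => Φ (x β, β)) (fderiv ℝ Φ (x α, α) (deriv x α, 1)) α := by
      have hγ : HasDerivAt (fun β : ℝ => ((x β, β) : EuclideanSpace ℝ (Fin 2) × ℝ))
          (deriv x α, (1 : ℝ)) α := (hxd α hα).prodMk (hasDerivAt_id α)
      have := (hΦd _).hasFDerivAt.comp_hasDerivAt α hγ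
      simpa [Function.comp_def] using this
    have heq : fderiv ℝ Φ (x α, α) (deriv x α, (1 : ℝ)) = fderiv ℝ Φ (x α, α) (0, 1) := by
      have hsplit : ((deriv x α, (1 : ℝ)) : EuclideanSpace ℝ (Fin 2) × ℝ)
          = (deriv x α, 0) + (0, 1) := by simp [Prod.ext_iff]
      rw [hsplit, map_add, hA α hα, zero_add]
    have := h1.sub h2
    rwa [heq] at this
  have hconst : ∀ α : ℝ, ∀ z : EuclideanSpace ℝ (Fin 2),
      HasDerivAt (fun β => Φ (z, β)) (fderiv ℝ Φ (z, α) (0, 1)) α := by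
    intro α z
    have hγ : HasDerivAt (fun β : ℝ => ((z, β) : EuclideanSpace ℝ (Fin 2) × ℝ))
        ((0 : EuclideanSpace ℝ (Fin 2)), (1 : ℝ)) α :=
      (hasDerivAt_const α z).prodMk (hasDerivAt_id α)
    have := (hΦd (z, α)).hasFDerivAt.comp_hasDerivAt α hγ
    simpa [Function.comp_def] using this
  -- second-derivative setup
  set x' : EuclideanSpace ℝ (Fin 2) := deriv x αt with hx'
  set G := fderiv ℝ (fderiv ℝ Φ) (x αt, αt) with hG
  -- derivative of g(α) = F(x̃,α)(0,1) - F(x α,α)(0,1)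
  have hcurve : HasDerivAt (fun α => fderiv ℝ Φ (x α, α)) (G (x', (1 : ℝ))) αt := by
    have hγ : HasDerivAt (fun β : ℝ => ((x β, β) : EuclideanSpace ℝ (Fin 2) × ℝ))
        (x', (1 : ℝ)) αt := (hxd αt hαt).prodMk (hasDerivAt_id αt)
    have := (hFd _).hasFDerivAt.comp_hasDerivAt αt hγ
    simpa [Function.comp_def, hG] using this
  have hg1 : HasDerivAt (fun α => fderiv ℝ Φ (x αt, α) ((0 : EuclideanSpace ℝ (Fin 2)), (1 : ℝ)))
      (G (0, 1) (0, 1)) αt := by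
    have hc : HasDerivAt (fun α => fderiv ℝ Φ (x αt, α)) (G ((0 : EuclideanSpace ℝ (Fin 2)), (1 : ℝ))) αt := by
      have hγ : HasDerivAt (fun β : ℝ => ((x αt, β) : EuclideanSpace ℝ (Fin 2) × ℝ))
          ((0 : EuclideanSpace ℝ (Fin 2)), (1 : ℝ)) αt :=
        (hasDerivAt_const αt (x αt)).prodMk (hasDerivAt_id αt)
      have := (hFd (x αt, αt)).hasFDerivAt.comp_hasDerivAt αt hγ
      simpa [Function.comp_def, hG] using this
    have := (ContinuousLinearMap.apply ℝ ℝ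
      ((0 : EuclideanSpace ℝ (Fin 2)), (1 : ℝ))).hasFDerivAt.comp_hasDerivAt αt hc
    simpa [Function.comp_def] using this
  have hg2 : HasDerivAt (fun α => fderiv ℝ Φ (x α, α) ((0 : EuclideanSpace ℝ (Fin 2)), (1 : ℝ)))
      (G (x', 1) (0, 1)) αt := by
    have := (ContinuousLinearMap.apply ℝ ℝ
      ((0 : EuclideanSpace ℝ (Fin 2)), (1 : ℝ))).hasFDerivAt.comp_hasDerivAt αt hcurve
    simpa [Function.comp_def] using this
  have hev : deriv (fun β => Φ (x αt, β) - Φ (x β, β)) =ᶠ[nhds αt]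
      (fun α => fderiv ℝ Φ (x αt, α) ((0 : EuclideanSpace ℝ (Fin 2)), (1 : ℝ))
        - fderiv ℝ Φ (x α, α) ((0 : EuclideanSpace ℝ (Fin 2)), (1 : ℝ))) := by
    filter_upwards [hIopen.mem_nhds hαt] with β hβ using (hQ' β hβ).deriv
  have hQ2 : HasDerivAt (deriv (fun β => Φ (x αt, β) - Φ (x β, β)))
      (G (0, 1) (0, 1) - G (x', 1) (0, 1)) αt :=
    (hg1.sub hg2).congr_of_eventuallyEq hev
  -- Claim B : G (x',1) (x',0) = (ν αt)⁻¹ * D²H(x',x')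
  have hB : G (x', 1) (x', 0) = (ν αt)⁻¹ * fderiv ℝ (fderiv ℝ H) (x αt) x' x' := by
    have ht : HasDerivAt (fun α => fderiv ℝ Φ (x α, α) ((x' : EuclideanSpace ℝ (Fin 2)), (0 : ℝ)))
        (G (x', 1) (x', 0)) αt := by
      have := (ContinuousLinearMap.apply ℝ ℝ
        ((x' : EuclideanSpace ℝ (Fin 2)), (0 : ℝ))).hasFDerivAt.comp_hasDerivAt αt hcurve
      simpa [Function.comp_def] using this
    have hw : HasDerivAt (fun α => fderiv ℝ H (x α) x') (fderiv ℝ (fderiv ℝ H) (x αt) x' x') αt := by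
      have hc : HasDerivAt (fun α => fderiv ℝ H (x α)) (fderiv ℝ (fderiv ℝ H) (x αt) x') αt := by
        have := (hdHd (x αt)).hasFDerivAt.comp_hasDerivAt αt (hxd αt hαt)
        simpa [Function.comp_def] using this
      have := (ContinuousLinearMap.apply ℝ ℝ x').hasFDerivAt.comp_hasDerivAt αt hc
      simpa [Function.comp_def] using this
    have hinv : HasDerivAt (fun α => (ν α)⁻¹) (-deriv ν αt / ν αt ^ 2) αt :=
      hνd.inv (hνne αt hαt)
    have hw0 : fderiv ℝ H (x αt) x' = 0 := by
      have h1 := DFunLike.congr_fun (hfd αt hαt) x'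
      simp only [ContinuousLinearMap.smul_apply, smul_eq_mul] at h1
      rw [slice_fderiv_apply Φ hΦd] at h1
      rw [h1, hx', hA αt hαt, mul_zero]
    have huw : HasDerivAt (fun α => (ν α)⁻¹ * fderiv ℝ H (x α) x')
        ((ν αt)⁻¹ * fderiv ℝ (fderiv ℝ H) (x αt) x' x') αt := by
      have := hinv.mul hw
      rw [hw0] at this
      simpa only [mul_zero, zero_add, Pi.mul_def] using this
    have heq2 : (fun α => fderiv ℝ Φ (x α, α) ((x' : EuclideanSpace ℝ (Fin 2)), (0 : ℝ)))
        =ᶠ[nhds αt] (fun α => (ν α)⁻¹ * fderiv ℝ H (x α) x') := by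
      filter_upwards [hIopen.mem_nhds hαt] with α hα
      have h1 := DFunLike.congr_fun (hfd α hα) x'
      simp only [ContinuousLinearMap.smul_apply, smul_eq_mul] at h1
      rw [slice_fderiv_apply Φ hΦd] at h1
      rw [h1, inv_mul_cancel_left₀ (hνne α hα)]
    exact ht.unique (huw.congr_of_eventuallyEq heq2)
  -- symmetry of the second derivative of Φ
  have hsym : G (x', 0) ((0 : EuclideanSpace ℝ (Fin 2)), (1 : ℝ)) = G (0, 1) (x', 0) := by
    rw [hG]
    exact (hΦ.contDiffAt (x := ((x αt, αt) : EuclideanSpace ℝ (Fin 2) × ℝ))).isSymmSndFDerivAt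
      (by norm_num) _ _
  -- identify the iterated derivatives
  have hitH : iteratedFDeriv ℝ 2 H (x αt) ![x', x'] = fderiv ℝ (fderiv ℝ H) (x αt) x' x' := by
    rw [iteratedFDeriv_two_apply]
    simp
  have hitΦ : iteratedFDeriv ℝ 2 (fun z => Φ (z, αt)) (x αt) ![x', x'] = G (x', 0) (x', 0) := by
    rw [iteratedFDeriv_two_apply]
    simp only [Matrix.cons_val_zero, Matrix.cons_val_one, Matrix.head_cons]
    have hslice2 : ContDiff ℝ 2 (fun z : EuclideanSpace ℝ (Fin 2) => Φ (z, αt)) :=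
      hΦ.comp (contDiff_id.prodMk contDiff_const)
    have hsd : DifferentiableAt ℝ (fderiv ℝ (fun z : EuclideanSpace ℝ (Fin 2) => Φ (z, αt))) (x αt) :=
      ((hslice2.fderiv_right (by norm_num)).differentiable one_ne_zero) (x αt)
    have k0 : HasDerivAt (fun t : ℝ => t) 1 0 := hasDerivAt_id 0  -- dummy
    have hk0 : HasFDerivAt (fun z => fderiv ℝ (fun w => Φ (w, αt)) z x')
        ((ContinuousLinearMap.apply ℝ ℝ x').comp
          (fderiv ℝ (fderiv ℝ (fun z : EuclideanSpace ℝ (Fin 2) => Φ (z, αt))) (x αt))) (x αt) := by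
      have := (ContinuousLinearMap.apply ℝ ℝ x').hasFDerivAt.comp (x αt) hsd.hasFDerivAt
      simpa [Function.comp_def] using this
    have hk1 : HasFDerivAt (fun z => fderiv ℝ (fun w => Φ (w, αt)) z x')
        ((ContinuousLinearMap.apply ℝ ℝ ((x' : EuclideanSpace ℝ (Fin 2)), (0 : ℝ))).comp
          (G.comp ((ContinuousLinearMap.id ℝ (EuclideanSpace ℝ (Fin 2))).prod 0))) (x αt) := by
      have hι : HasFDerivAt (fun z : EuclideanSpace ℝ (Fin 2) => (z, αt))
          ((ContinuousLinearMap.id ℝ (EuclideanSpace ℝ (Fin 2))).prod 0) (x αt) :=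
        (hasFDerivAt_id (x αt)).prodMk (hasFDerivAt_const αt (x αt))
      have h5 : HasFDerivAt (fun z : EuclideanSpace ℝ (Fin 2) => fderiv ℝ Φ (z, αt))
          (G.comp ((ContinuousLinearMap.id ℝ (EuclideanSpace ℝ (Fin 2))).prod 0)) (x αt) := by
        have := (hFd (x αt, αt)).hasFDerivAt.comp (x αt) hι
        simpa [Function.comp_def, hG] using this
      have h6 := (ContinuousLinearMap.apply ℝ ℝ
        ((x' : EuclideanSpace ℝ (Fin 2)), (0 : ℝ))).hasFDerivAt.comp (x αt) h5
      have hfun : (fun z => fderiv ℝ (fun w => Φ (w, αt)) z x')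
          = fun z : EuclideanSpace ℝ (Fin 2) => fderiv ℝ Φ (z, αt) (x', 0) :=
        funext fun z => slice_fderiv_apply Φ hΦd z αt x'
      rw [hfun]
      simpa [Function.comp_def] using h6
    have hEq := hk0.unique hk1
    have happ := DFunLike.congr_fun hEq x'
    simpa using happ
  -- expansions by bilinearity
  have e1 : G (x', 1) ((0 : EuclideanSpace ℝ (Fin 2)), (1 : ℝ)) = G (x', 0) (0, 1) + G (0, 1) (0, 1) := by
    have hsplit : ((x', (1 : ℝ)) : EuclideanSpace ℝ (Fin 2) × ℝ) = (x', 0) + (0, 1) := by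
      simp [Prod.ext_iff]
    rw [hsplit, map_add, ContinuousLinearMap.add_apply]
  have e2 : G (x', 1) ((x' : EuclideanSpace ℝ (Fin 2)), (0 : ℝ)) = G (x', 0) (x', 0) + G (0, 1) (x', 0) := by
    have hsplit : ((x', (1 : ℝ)) : EuclideanSpace ℝ (Fin 2) × ℝ) = (x', 0) + (0, 1) := by
      simp [Prod.ext_iff]
    rw [hsplit, map_add, ContinuousLinearMap.add_apply]
  refine ⟨by ring, ?_, ?_, hQ2.differentiableAt, ?_⟩
  · intro α hα
    rw [(hQ' α hα).deriv, (hconst α (x αt)).deriv, (hconst α (x α)).deriv]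
  · rw [(hQ' αt hαt).deriv, sub_self]
  · rw [hQ2.deriv, hitΦ, hitH, one_div]
    linarith [hB, e1, e2, hsym]
end

section
/- Let n ≥ 1, s ∈ (0,1), and L, L′ > 0. Let g : ℝⁿ → ℝ have compact support and satisfy |g(x) − g(y)| ≤ L|x − y|^s for all x, y. Let φ : ℝⁿ → ℝ have compact support, satisfy |φ(x) − φ(y)| ≤ L′|x − y|^s for all x, y, and satisfy ∑_{j∈ℤⁿ} φ(u − j) = 1 for all u ∈ ℝⁿ. For ε > 0, define the interpolant g_ε(y) := ∑_{j∈ℤⁿ} φ(y/ε − j) g(εj). Then there exists C > 0 (depending only on g, φ, s, n) such that for every ε ∈ (0,1]: (i) |g_ε(y) − g(y)| ≤ C ε^s for all y ∈ ℝⁿ; (ii) |g_ε(y + h) − g_ε(y)| ≤ C |h|^s for all y, h ∈ ℝⁿ; (iii) ‖g_ε‖_∞ ≤ C. -/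
/-- The point of the integer lattice `ℤⁿ` viewed inside `ℝⁿ`. -/
noncomputable def latticePt (n : ℕ) (j : Fin n → ℤ) : EuclideanSpace ℝ (Fin n) :=
  WithLp.toLp 2 (fun i => (j i : ℝ))

/-- The interpolant of `g` with kernel `φ` at grid step `ε`:
`g_ε(y) = ∑_{j ∈ ℤⁿ} φ(y/ε − j) g(εj)`. -/
noncomputable def interpolant (n : ℕ) (φ g : EuclideanSpace ℝ (Fin n) → ℝ) (ε : ℝ)
    (y : EuclideanSpace ℝ (Fin n)) : ℝ :=
  ∑' j : Fin n → ℤ, φ (ε⁻¹ • y - latticePt n j) * g (ε • latticePt n j)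

lemma euclid_abs_le_norm {n : ℕ} (x : EuclideanSpace ℝ (Fin n)) (i : Fin n) : |x i| ≤ ‖x‖ := by
  rw [EuclideanSpace.norm_eq, ← Real.sqrt_sq (abs_nonneg (x i))]
  apply Real.sqrt_le_sqrt
  rw [sq_abs]
  calc x i ^ 2 = ‖x i‖ ^ 2 := by rw [Real.norm_eq_abs, sq_abs]
  _ ≤ _ := Finset.single_le_sum (f := fun i => ‖x i‖ ^ 2) (fun i _ => sq_nonneg _)
      (Finset.mem_univ i)

lemma euclid_norm_le {n : ℕ} (x : EuclideanSpace ℝ (Fin n)) {r : ℝ} (hr : 0 ≤ r)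
    (h : ∀ i, |x i| ≤ r) : ‖x‖ ≤ n * r := by
  rw [EuclideanSpace.norm_eq]
  have h1 : ∑ i, ‖x i‖ ^ 2 ≤ (n : ℝ) * r ^ 2 := by
    calc ∑ i, ‖x i‖ ^ 2 ≤ ∑ _i : Fin n, r ^ 2 := by
          apply Finset.sum_le_sum
          intro i _
          rw [Real.norm_eq_abs]
          exact pow_le_pow_left₀ (abs_nonneg _) (h i) 2
      _ = (n : ℝ) * r ^ 2 := by simp [mul_comm]
  have hn2 : (n : ℝ) ≤ (n : ℝ) ^ 2 := by
    have := Nat.le_self_pow (two_ne_zero) n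
    calc (n : ℝ) ≤ ((n ^ 2 : ℕ) : ℝ) := by exact_mod_cast this
      _ = (n : ℝ) ^ 2 := by push_cast; ring
  calc Real.sqrt (∑ i, ‖x i‖ ^ 2) ≤ Real.sqrt (((n : ℝ) * r) ^ 2) := by
        apply Real.sqrt_le_sqrt
        nlinarith [sq_nonneg r]
    _ = (n : ℝ) * r := Real.sqrt_sq (by positivity)

/-- The finite box of lattice points at distance roughly `≤ R` from `u`. -/
noncomputable def gridBox (n : ℕ) (R : ℝ) (u : EuclideanSpace ℝ (Fin n)) :
    Finset (Fin n → ℤ) :=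
  Finset.Icc (fun i => ⌈u i - R⌉) (fun i => ⌊u i + R⌋)

lemma mem_gridBox {n : ℕ} {R : ℝ} {u : EuclideanSpace ℝ (Fin n)} {j : Fin n → ℤ}
    (h : ‖u - latticePt n j‖ ≤ R) : j ∈ gridBox n R u := by
  rw [gridBox, Finset.mem_Icc]
  have hco : ∀ i, |u i - (j i : ℝ)| ≤ R := by
    intro i
    have : (u - latticePt n j) i = u i - (j i : ℝ) := by simp [latticePt]
    calc |u i - (j i : ℝ)| = |(u - latticePt n j) i| := by rw [this]
      _ ≤ ‖u - latticePt n j‖ := euclid_abs_le_norm _ i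
      _ ≤ R := h
  constructor
  · intro i
    have := abs_le.1 (hco i)
    exact Int.ceil_le.2 (by linarith [this.1])
  · intro i
    have := abs_le.1 (hco i)
    exact Int.le_floor.2 (by linarith [this.2])

lemma norm_le_of_mem_gridBox {n : ℕ} {R : ℝ} (hR : 0 ≤ R) {u : EuclideanSpace ℝ (Fin n)}
    {j : Fin n → ℤ} (h : j ∈ gridBox n R u) : ‖u - latticePt n j‖ ≤ n * R := by
  rw [gridBox, Finset.mem_Icc] at h
  apply euclid_norm_le _ hR
  intro i
  have h1 : (⌈u i - R⌉ : ℝ) ≤ (j i : ℝ) := by exact_mod_cast h.1 i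
  have h2 : ((j i : ℤ) : ℝ) ≤ (⌊u i + R⌋ : ℝ) := by exact_mod_cast h.2 i
  have h3 : u i - R ≤ (⌈u i - R⌉ : ℝ) := Int.le_ceil _
  have h4 : ((⌊u i + R⌋ : ℤ) : ℝ) ≤ u i + R := Int.floor_le _
  have : (u - latticePt n j) i = u i - (j i : ℝ) := by simp [latticePt]
  rw [this, abs_le]
  constructor <;> linarith

lemma card_gridBox_le {n : ℕ} {R : ℝ} (hR : 1 ≤ R) (u : EuclideanSpace ℝ (Fin n)) :
    ((gridBox n R u).card : ℝ) ≤ (3 * R) ^ n := by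
  rw [gridBox, Pi.card_Icc]
  push_cast
  calc (∏ i, ((Finset.Icc (⌈u i - R⌉) (⌊u i + R⌋)).card : ℝ))
      ≤ ∏ _i : Fin n, (3 * R) := by
        apply Finset.prod_le_prod
        · intro i _; positivity
        · intro i _
          rw [Int.card_Icc]
          set k : ℤ := ⌊u i + R⌋ + 1 - ⌈u i - R⌉ with hk
          rcases le_or_gt k 0 with hk0 | hk0
          · rw [Int.toNat_of_nonpos hk0]
            norm_num; linarith
          · have hcast : ((k.toNat : ℕ) : ℝ) = (k : ℝ) := by
              exact_mod_cast Int.toNat_of_nonneg hk0.le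
            rw [hcast]
            have h3 : u i - R ≤ (⌈u i - R⌉ : ℝ) := Int.le_ceil _
            have h4 : ((⌊u i + R⌋ : ℤ) : ℝ) ≤ u i + R := Int.floor_le _
            have : (k : ℝ) = (⌊u i + R⌋ : ℝ) + 1 - (⌈u i - R⌉ : ℝ) := by
              rw [hk]; push_cast; ring
            rw [this]
            linarith
    _ = (3 * R) ^ n := by rw [Finset.prod_const, Finset.card_univ, Fintype.card_fin]

set_option maxHeartbeats 2000000 in
/-- Uniform Hölder regularity and approximation property of grid interpolation of a
compactly supported Hölder function with a compactly supported Hölder kernel forming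
a partition of unity. -/
theorem stmt_7 (n : ℕ) (hn : 1 ≤ n) (s L L' : ℝ) (hs : s ∈ Set.Ioo (0:ℝ) 1)
    (hL : 0 < L) (hL' : 0 < L')
    (g φ : EuclideanSpace ℝ (Fin n) → ℝ)
    (hg_supp : HasCompactSupport g)
    (hφ_supp : HasCompactSupport φ)
    (hg_hold : ∀ x y, |g x - g y| ≤ L * ‖x - y‖ ^ s)
    (hφ_hold : ∀ x y, |φ x - φ y| ≤ L' * ‖x - y‖ ^ s)
    (hφ_sum : ∀ u : EuclideanSpace ℝ (Fin n), ∑' j : Fin n → ℤ, φ (u - latticePt n j) = 1) :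
    ∃ C > 0, ∀ ε ∈ Set.Ioc (0:ℝ) 1,
      (∀ y, |interpolant n φ g ε y - g y| ≤ C * ε ^ s) ∧
      (∀ y h, |interpolant n φ g ε (y + h) - interpolant n φ g ε y| ≤ C * ‖h‖ ^ s) ∧
      (∀ y, |interpolant n φ g ε y| ≤ C) := by
  classical
  obtain ⟨hs0, hs1⟩ := hs
  -- radius of the support of φ
  obtain ⟨R, hR1, hRsupp⟩ := (hφ_supp.isBounded.subset_closedBall_lt 1 0)
  -- radius of the support of g
  obtain ⟨Rg, hRg0, hRgsupp⟩ := (hg_supp.isBounded.subset_closedBall_lt 0 0)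
  -- a unit vector
  set e0 : EuclideanSpace ℝ (Fin n) := EuclideanSpace.single ⟨0, hn⟩ (1:ℝ) with he0
  have he0norm : ‖e0‖ = 1 := by rw [he0, EuclideanSpace.norm_single, norm_one]
  -- boundedness from Hölder continuity + compact support
  have bdd : ∀ (f : EuclideanSpace ℝ (Fin n) → ℝ) (Lf r : ℝ), 0 < Lf → 0 ≤ r →
      (∀ x y, |f x - f y| ≤ Lf * ‖x - y‖ ^ s) → (tsupport f ⊆ Metric.closedBall 0 r) →
      ∀ x, |f x| ≤ Lf * (2 * r + 2) ^ s := by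
    intro f Lf r hLf hr hf hsupp x
    have hbpos : (0:ℝ) < Lf * (2 * r + 2) ^ s := by positivity
    rcases le_or_gt ‖x‖ r with hx | hx
    · set v : EuclideanSpace ℝ (Fin n) := (2 * r + 2) • e0 with hv
      have hvnorm : ‖v‖ = 2 * r + 2 := by
        rw [hv, norm_smul, he0norm, mul_one, Real.norm_eq_abs, abs_of_pos (by linarith)]
      have hxv : f (x + v) = 0 := by
        apply image_eq_zero_of_notMem_tsupport
        intro hmem
        have hball : ‖x + v‖ ≤ r := by
          have := hsupp hmem
          rwa [Metric.mem_closedBall, dist_zero_right] at this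
        have hlow : ‖v‖ - ‖x‖ ≤ ‖x + v‖ := by
          have h6 := norm_sub_norm_le v (-x)
          rw [norm_neg, sub_neg_eq_add] at h6
          calc ‖v‖ - ‖x‖ ≤ ‖v + x‖ := h6
            _ = ‖x + v‖ := by rw [add_comm]
        rw [hvnorm] at hlow
        linarith
      calc |f x| = |f x - f (x + v)| := by rw [hxv, sub_zero]
        _ ≤ Lf * ‖x - (x + v)‖ ^ s := hf _ _
        _ = Lf * (2 * r + 2) ^ s := by
            rw [show x - (x + v) = -v by abel, norm_neg, hvnorm]
    · have : f x = 0 := by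
        apply image_eq_zero_of_notMem_tsupport
        intro hmem
        have := Metric.mem_closedBall.1 (hsupp hmem)
        rw [dist_zero_right] at this
        linarith
      rw [this, abs_zero]; exact hbpos.le
  set Mφ : ℝ := L' * (2 * R + 2) ^ s with hMφdef
  have hMφpos : 0 < Mφ := by positivity
  have hMφ : ∀ x, |φ x| ≤ Mφ := bdd φ L' R hL' (by linarith) hφ_hold hRsupp
  set Mg : ℝ := L * (2 * Rg + 2) ^ s with hMgdef
  have hMgpos : 0 < Mg := by positivity
  have hMg : ∀ x, |g x| ≤ Mg := bdd g L Rg hL (by linarith) hg_hold hRgsupp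
  have hR0 : (0:ℝ) < R := by linarith
  -- vanishing of φ off the grid box
  have hφ0 : ∀ (u : EuclideanSpace ℝ (Fin n)) (j : Fin n → ℤ), j ∉ gridBox n R u →
      φ (u - latticePt n j) = 0 := by
    intro u j hj
    apply image_eq_zero_of_notMem_tsupport
    intro hmem
    have hball := hRsupp hmem
    rw [Metric.mem_closedBall, dist_zero_right] at hball
    exact hj (mem_gridBox hball)
  -- converting tsums to finite sums
  have hsum_eq : ∀ (u : EuclideanSpace ℝ (Fin n)) (c : (Fin n → ℤ) → ℝ)
      (S : Finset (Fin n → ℤ)), gridBox n R u ⊆ S →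
      ∑' j : Fin n → ℤ, φ (u - latticePt n j) * c j
        = ∑ j ∈ S, φ (u - latticePt n j) * c j := by
    intro u c S hS
    exact tsum_eq_sum (fun j hj => by rw [hφ0 u j (fun h => hj (hS h)), zero_mul])
  have hone : ∀ (u : EuclideanSpace ℝ (Fin n)) (S : Finset (Fin n → ℤ)),
      gridBox n R u ⊆ S → ∑ j ∈ S, φ (u - latticePt n j) = 1 := by
    intro u S hS
    rw [← hφ_sum u]
    exact (tsum_eq_sum (fun j hj => hφ0 u j (fun h => hj (hS h)))).symm
  -- key identity
  have key : ∀ (ε : ℝ), 0 < ε → ∀ (y : EuclideanSpace ℝ (Fin n)) (S : Finset (Fin n → ℤ)),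
      gridBox n R (ε⁻¹ • y) ⊆ S →
      interpolant n φ g ε y - g y
        = ∑ j ∈ S, φ (ε⁻¹ • y - latticePt n j) * (g (ε • latticePt n j) - g y) := by
    intro ε hε y S hS
    rw [interpolant, hsum_eq _ _ S hS]
    have h1 := hone (ε⁻¹ • y) S hS
    simp only [mul_sub, Finset.sum_sub_distrib, ← Finset.sum_mul, h1, one_mul]
  -- distance bound within the grid box
  have hdist : ∀ (ε : ℝ), 0 < ε → ∀ (y : EuclideanSpace ℝ (Fin n)) (j : Fin n → ℤ),
      j ∈ gridBox n R (ε⁻¹ • y) → ‖ε • latticePt n j - y‖ ≤ ε * (n * R) := by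
    intro ε hε y j hj
    have h1 : ‖ε⁻¹ • y - latticePt n j‖ ≤ n * R := norm_le_of_mem_gridBox hR0.le hj
    have h2 : ε • latticePt n j - y = (-ε) • (ε⁻¹ • y - latticePt n j) := by
      rw [smul_sub, smul_smul]
      rw [neg_mul, mul_inv_cancel₀ hε.ne']; simp only [neg_smul, one_smul]
      abel
    rw [h2, norm_smul, Real.norm_eq_abs, abs_neg, abs_of_pos hε]
    exact mul_le_mul_of_nonneg_left h1 hε.le
  -- generic sum bound
  have sum_bound : ∀ (S : Finset (Fin n → ℤ)) (f : (Fin n → ℤ) → ℝ) (B : ℝ),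
      (∀ j ∈ S, |f j| ≤ B) → |∑ j ∈ S, f j| ≤ S.card * B := by
    intro S f B hB
    calc |∑ j ∈ S, f j| ≤ ∑ j ∈ S, |f j| := Finset.abs_sum_le_sum_abs _ _
      _ ≤ ∑ _j ∈ S, B := Finset.sum_le_sum hB
      _ = S.card * B := by rw [Finset.sum_const, nsmul_eq_mul]
  -- main constants
  set C₁ : ℝ := (3 * R) ^ n * (Mφ * (L * (n * R) ^ s)) with hC₁def
  have hnR : (0:ℝ) < n * R := by
    have : (1:ℝ) ≤ (n:ℝ) := by exact_mod_cast hn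
    nlinarith
  have hC₁pos : 0 < C₁ := by positivity
  set C₂ : ℝ := 2 * (3 * R) ^ n * (L' * (L * (n * R + 1) ^ s)) with hC₂def
  have hC₂pos : 0 < C₂ := by positivity
  -- claim (i)
  have claim1 : ∀ ε ∈ Set.Ioc (0:ℝ) 1, ∀ y, |interpolant n φ g ε y - g y| ≤ C₁ * ε ^ s := by
    rintro ε ⟨hε0, hε1⟩ y
    set u := ε⁻¹ • y with hu
    rw [key ε hε0 y (gridBox n R u) (by rw [hu])]
    have hterm : ∀ j ∈ gridBox n R u,
        |φ (u - latticePt n j) * (g (ε • latticePt n j) - g y)|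
          ≤ Mφ * (L * (n * R) ^ s * ε ^ s) := by
      intro j hj
      rw [abs_mul]
      apply mul_le_mul (hMφ _) ?_ (abs_nonneg _) hMφpos.le
      calc |g (ε • latticePt n j) - g y| ≤ L * ‖ε • latticePt n j - y‖ ^ s := hg_hold _ _
        _ ≤ L * (ε * (n * R)) ^ s := by
            apply mul_le_mul_of_nonneg_left _ hL.le
            exact Real.rpow_le_rpow (norm_nonneg _) (hdist ε hε0 y j hj) hs0.le
        _ = L * (n * R) ^ s * ε ^ s := by
            rw [Real.mul_rpow hε0.le hnR.le]; ring
    calc |∑ j ∈ gridBox n R u, φ (u - latticePt n j) * (g (ε • latticePt n j) - g y)|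
        ≤ (gridBox n R u).card * (Mφ * (L * (n * R) ^ s * ε ^ s)) := sum_bound _ _ _ hterm
      _ ≤ (3 * R) ^ n * (Mφ * (L * (n * R) ^ s * ε ^ s)) := by
          apply mul_le_mul_of_nonneg_right (card_gridBox_le hR1.le u) (by positivity)
      _ = C₁ * ε ^ s := by rw [hC₁def]; ring
  -- claim (ii), case ‖h‖ ≤ ε
  have claim2a : ∀ ε ∈ Set.Ioc (0:ℝ) 1, ∀ y h : EuclideanSpace ℝ (Fin n), ‖h‖ ≤ ε →
      |interpolant n φ g ε (y + h) - interpolant n φ g ε y| ≤ C₂ * ‖h‖ ^ s := by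
    rintro ε ⟨hε0, hε1⟩ y h hh
    set u := ε⁻¹ • y with hu
    set u' := ε⁻¹ • (y + h) with hu'
    set S : Finset (Fin n → ℤ) := gridBox n R u ∪ gridBox n R u' with hSdef
    have hSu : gridBox n R u ⊆ S := Finset.subset_union_left
    have hSu' : gridBox n R u' ⊆ S := Finset.subset_union_right
    have e1 : interpolant n φ g ε (y + h)
        = ∑ j ∈ S, φ (u' - latticePt n j) * g (ε • latticePt n j) := by
      rw [interpolant, ← hu']
      exact hsum_eq u' _ S hSu'
    have e2 : interpolant n φ g ε y
        = ∑ j ∈ S, φ (u - latticePt n j) * g (ε • latticePt n j) := by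
      rw [interpolant, ← hu]
      exact hsum_eq u _ S hSu
    have e3 : ∑ j ∈ S, (φ (u' - latticePt n j) - φ (u - latticePt n j)) * g y = 0 := by
      rw [← Finset.sum_mul, Finset.sum_sub_distrib, hone u' S hSu', hone u S hSu]
      ring
    have e4 : interpolant n φ g ε (y + h) - interpolant n φ g ε y
        = ∑ j ∈ S, (φ (u' - latticePt n j) - φ (u - latticePt n j))
            * (g (ε • latticePt n j) - g y) := by
      rw [e1, e2]
      rw [show (∑ j ∈ S, (φ (u' - latticePt n j) - φ (u - latticePt n j))
            * (g (ε • latticePt n j) - g y))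
          = (∑ j ∈ S, (φ (u' - latticePt n j) - φ (u - latticePt n j))
              * g (ε • latticePt n j))
            - ∑ j ∈ S, (φ (u' - latticePt n j) - φ (u - latticePt n j)) * g y by
        rw [← Finset.sum_sub_distrib]; congr 1; ext j; ring]
      rw [e3, sub_zero, ← Finset.sum_sub_distrib]
      congr 1; ext j; ring
    -- per-term bounds
    have huu' : ‖u' - u‖ = ε⁻¹ * ‖h‖ := by
      rw [hu', hu, ← smul_sub, show y + h - y = h by abel, norm_smul, Real.norm_eq_abs,
        abs_of_pos (by positivity)]
    have hφdiff : ∀ j : Fin n → ℤ,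
        |φ (u' - latticePt n j) - φ (u - latticePt n j)| ≤ L' * (ε⁻¹ * ‖h‖) ^ s := by
      intro j
      calc |φ (u' - latticePt n j) - φ (u - latticePt n j)|
          ≤ L' * ‖(u' - latticePt n j) - (u - latticePt n j)‖ ^ s := hφ_hold _ _
        _ = L' * (ε⁻¹ * ‖h‖) ^ s := by rw [sub_sub_sub_cancel_right, huu']
    have hgdiff : ∀ j ∈ S, |g (ε • latticePt n j) - g y| ≤ L * (ε * (n * R + 1)) ^ s := by
      intro j hj
      have hd : ‖ε • latticePt n j - y‖ ≤ ε * (n * R + 1) := by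
        rcases Finset.mem_union.1 hj with hj | hj
        · calc ‖ε • latticePt n j - y‖ ≤ ε * (n * R) := hdist ε hε0 y j hj
            _ ≤ ε * (n * R + 1) := by nlinarith
        · have := hdist ε hε0 (y + h) j hj
          calc ‖ε • latticePt n j - y‖
              = ‖(ε • latticePt n j - (y + h)) + h‖ := by congr 1; abel
            _ ≤ ‖ε • latticePt n j - (y + h)‖ + ‖h‖ := norm_add_le _ _
            _ ≤ ε * (n * R) + ε := by linarith
            _ = ε * (n * R + 1) := by ring
      calc |g (ε • latticePt n j) - g y| ≤ L * ‖ε • latticePt n j - y‖ ^ s := hg_hold _ _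
        _ ≤ L * (ε * (n * R + 1)) ^ s := by
            apply mul_le_mul_of_nonneg_left _ hL.le
            exact Real.rpow_le_rpow (norm_nonneg _) hd hs0.le
    have hprod : (ε⁻¹ * ‖h‖) ^ s * (ε * (n * R + 1)) ^ s = (n * R + 1) ^ s * ‖h‖ ^ s := by
      rw [← Real.mul_rpow (by positivity) (by positivity),
        show ε⁻¹ * ‖h‖ * (ε * (n * R + 1)) = ‖h‖ * (n * R + 1) by field_simp,
        Real.mul_rpow (norm_nonneg _) (by positivity)]
      ring
    have hterm : ∀ j ∈ S,
        |(φ (u' - latticePt n j) - φ (u - latticePt n j)) * (g (ε • latticePt n j) - g y)|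
          ≤ L' * L * (n * R + 1) ^ s * ‖h‖ ^ s := by
      intro j hj
      rw [abs_mul]
      calc |φ (u' - latticePt n j) - φ (u - latticePt n j)| * |g (ε • latticePt n j) - g y|
          ≤ (L' * (ε⁻¹ * ‖h‖) ^ s) * (L * (ε * (n * R + 1)) ^ s) :=
            mul_le_mul (hφdiff j) (hgdiff j hj) (abs_nonneg _) (by positivity)
        _ = L' * L * ((ε⁻¹ * ‖h‖) ^ s * (ε * (n * R + 1)) ^ s) := by ring
        _ = L' * L * (n * R + 1) ^ s * ‖h‖ ^ s := by rw [hprod]; ring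
    have hcard : (S.card : ℝ) ≤ 2 * (3 * R) ^ n := by
      calc (S.card : ℝ) ≤ ((gridBox n R u).card : ℝ) + ((gridBox n R u').card : ℝ) := by
            exact_mod_cast Finset.card_union_le _ _
        _ ≤ 2 * (3 * R) ^ n := by
            linarith [card_gridBox_le hR1.le u, card_gridBox_le hR1.le u']
    rw [e4]
    calc |∑ j ∈ S, (φ (u' - latticePt n j) - φ (u - latticePt n j))
            * (g (ε • latticePt n j) - g y)|
        ≤ S.card * (L' * L * (n * R + 1) ^ s * ‖h‖ ^ s) := sum_bound _ _ _ hterm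
      _ ≤ 2 * (3 * R) ^ n * (L' * L * (n * R + 1) ^ s * ‖h‖ ^ s) := by
          apply mul_le_mul_of_nonneg_right hcard (by positivity)
      _ = C₂ * ‖h‖ ^ s := by rw [hC₂def]; ring
  -- assemble
  set C : ℝ := 3 * C₁ + C₂ + L + Mg with hCdef
  have hCpos : 0 < C := by positivity
  refine ⟨C, hCpos, ?_⟩
  intro ε hε
  obtain ⟨hε0, hε1⟩ := hε
  have hεs0 : (0:ℝ) ≤ ε ^ s := Real.rpow_nonneg hε0.le s
  have hεs1 : ε ^ s ≤ 1 := Real.rpow_le_one hε0.le hε1 hs0.le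
  refine ⟨?_, ?_, ?_⟩
  · intro y
    calc |interpolant n φ g ε y - g y| ≤ C₁ * ε ^ s := claim1 ε ⟨hε0, hε1⟩ y
      _ ≤ C * ε ^ s := by
        apply mul_le_mul_of_nonneg_right _ hεs0
        rw [hCdef]; linarith
  · intro y h
    have hhs0 : (0:ℝ) ≤ ‖h‖ ^ s := Real.rpow_nonneg (norm_nonneg _) s
    rcases le_or_gt ‖h‖ ε with hcase | hcase
    · calc |interpolant n φ g ε (y + h) - interpolant n φ g ε y|
          ≤ C₂ * ‖h‖ ^ s := claim2a ε ⟨hε0, hε1⟩ y h hcase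
        _ ≤ C * ‖h‖ ^ s := by
          apply mul_le_mul_of_nonneg_right _ hhs0
          rw [hCdef]; linarith
    · have hεh : ε ^ s ≤ ‖h‖ ^ s := Real.rpow_le_rpow hε0.le hcase.le hs0.le
      calc |interpolant n φ g ε (y + h) - interpolant n φ g ε y|
          = |(interpolant n φ g ε (y + h) - g (y + h)) + (g (y + h) - g y)
              + (g y - interpolant n φ g ε y)| := by congr 1; ring
        _ ≤ |(interpolant n φ g ε (y + h) - g (y + h)) + (g (y + h) - g y)|
              + |g y - interpolant n φ g ε y| := abs_add_le _ _
        _ ≤ |interpolant n φ g ε (y + h) - g (y + h)| + |g (y + h) - g y|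
              + |g y - interpolant n φ g ε y| := by
            linarith [abs_add_le (interpolant n φ g ε (y + h) - g (y + h)) (g (y + h) - g y)]
        _ ≤ C₁ * ε ^ s + L * ‖(y + h) - y‖ ^ s + C₁ * ε ^ s := by
            have h1 := claim1 ε ⟨hε0, hε1⟩ (y + h)
            have h2 := claim1 ε ⟨hε0, hε1⟩ y
            rw [abs_sub_comm] at h2
            have h3 := hg_hold (y + h) y
            linarith
        _ = 2 * C₁ * ε ^ s + L * ‖h‖ ^ s := by
            rw [show y + h - y = h by abel]; ring
        _ ≤ C * ‖h‖ ^ s := by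
            have : 2 * C₁ * ε ^ s ≤ 2 * C₁ * ‖h‖ ^ s := by nlinarith
            rw [hCdef]; nlinarith
  · intro y
    calc |interpolant n φ g ε y|
        ≤ |interpolant n φ g ε y - g y| + |g y| := by
          have := abs_add_le (interpolant n φ g ε y - g y) (g y)
          simpa using this
      _ ≤ C₁ * ε ^ s + Mg := add_le_add (claim1 ε ⟨hε0, hε1⟩ y) (hMg y)
      _ ≤ C := by
          rw [hCdef]
          nlinarith
end

section
/- Let A > 0, let f : ℝ → ℝ be twice continuously differentiable with f, f′, f″ bounded, and let φ : ℝ → ℝ be twice continuously differentiable with compact support and exact up to order one, i.e. ∑_{j∈ℤ} φ(u − j) = 1 and ∑_{j∈ℤ} j φ(u − j) = u for all u ∈ ℝ. Then there exists C > 0 such that for all ε ∈ (0,1], all t ≥ 1 with εt ≤ A, and all q ∈ ℝ with ε|q| ≤ A, the function E(t) := ∑_{j∈ℤ} φ(t + q − j) f(εj) max(j − q, 0)^{1/2} − f(ε(t + q)) t^{1/2} satisfies |E(t)| ≤ C t^{−3/2}, |E′(t)| ≤ C t^{−3/2}, and |E″(t)| ≤ C t^{−3/2}, where the derivatives are taken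 with respect to t. -/
set_option maxHeartbeats 3200000

lemma aux_sqrt_max (a : ℝ) : Real.sqrt (max a 0) = Real.sqrt a := by
  rcases le_total a 0 with h | h
  · rw [max_eq_right h, Real.sqrt_zero]
    exact (Real.sqrt_eq_zero'.mpr h).symm
  · rw [max_eq_left h]

lemma aux_rpow (t : ℝ) (ht : 0 < t) : t ^ (-(3:ℝ)/2) = 1/(t * Real.sqrt t) := by
  rw [show (-(3:ℝ)/2) = -(1 + 1/2) by norm_num, Real.rpow_neg ht.le, Real.rpow_add ht,
    Real.rpow_one, ← Real.sqrt_eq_rpow, one_div]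

lemma aux_sqrt_le (x : ℝ) (hx : 1 ≤ x) : Real.sqrt x ≤ x := by
  nlinarith [Real.sq_sqrt (by linarith : (0:ℝ) ≤ x), Real.sqrt_nonneg x]

lemma aux_deriv_f' (f : ℝ → ℝ) (hf : ContDiff ℝ 2 f) :
    Differentiable ℝ f ∧ Differentiable ℝ (deriv f) := by
  have h2 : (2 : WithTop ℕ∞) = 1 + 1 := by norm_num
  rw [h2] at hf
  obtain ⟨h1, -, h3⟩ := contDiff_succ_iff_deriv.mp hf
  exact ⟨h1, h3.differentiable one_ne_zero⟩

/-- Taylor-type bound from two MVT applications. -/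
lemma aux_taylor2 {h h1 h2 : ℝ → ℝ} {s : Set ℝ} (hconv : Convex ℝ s)
    (hd1 : ∀ x ∈ s, HasDerivAt h (h1 x) x) (hd2 : ∀ x ∈ s, HasDerivAt h1 (h2 x) x)
    {M r u b : ℝ} (hM : ∀ x ∈ s, |h2 x| ≤ M) (hr : ∀ x ∈ s, |x - u| ≤ r)
    (hu : u ∈ s) (hb : b ∈ s) :
    |h b - h u - (b - u) * h1 u| ≤ M * r * r := by
  have hMr : ∀ x ∈ s, |h1 x - h1 u| ≤ M * r := by
    intro x hx
    have := Convex.norm_image_sub_le_of_norm_hasDerivWithin_le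
      (f := h1) (f' := h2) (s := s) (C := M)
      (fun y hy => (hd2 y hy).hasDerivWithinAt) (fun y hy => hM y hy) hconv hu hx
    rw [Real.norm_eq_abs, Real.norm_eq_abs] at this
    have hM0 : 0 ≤ M := (abs_nonneg _).trans (hM u hu)
    calc |h1 x - h1 u| ≤ M * |x - u| := this
    _ ≤ M * r := by exact mul_le_mul_of_nonneg_left (hr x hx) hM0
  set g : ℝ → ℝ := fun x => h x - h u - (x - u) * h1 u with hg
  have hgd : ∀ x ∈ s, HasDerivAt g (h1 x - h1 u) x := by
    intro x hx
    have : HasDerivAt (fun y : ℝ => (y - u) * h1 u) (h1 u) x := by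
      simpa using (((hasDerivAt_id x).sub_const u).mul_const (h1 u))
    exact ((hd1 x hx).sub_const (h u)).sub this
  have := Convex.norm_image_sub_le_of_norm_hasDerivWithin_le
    (f := g) (f' := fun x => h1 x - h1 u) (s := s) (C := M * r)
    (fun y hy => (hgd y hy).hasDerivWithinAt) (fun y hy => by
      rw [Real.norm_eq_abs]; exact hMr y hy) hconv hu hb
  rw [Real.norm_eq_abs, Real.norm_eq_abs] at this
  have hgu : g u = 0 := by simp [hg]
  have hgb : g b = h b - h u - (b - u) * h1 u := rfl
  rw [hgu, sub_zero] at this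
  calc |h b - h u - (b - u) * h1 u| = |g b| := by rw [hgb]
  _ ≤ M * r * |b - u| := this
  _ ≤ M * r * r := by
      have hM0 : 0 ≤ M := (abs_nonneg _).trans (hM u hu)
      have hr0 : 0 ≤ r := (abs_nonneg _).trans (hr u hu)
      exact mul_le_mul_of_nonneg_left (hr b hb) (by positivity)

lemma aux_locfin (ψ : ℝ → ℝ) (hψ : ContDiff ℝ 2 ψ) (c : ℤ → ℝ) (R : ℝ)
    (h0 : ∀ x : ℝ, R < |x| → ψ x = 0) (u₀ : ℝ) :
    ((fun u => ∑' j : ℤ, ψ (u - (j:ℝ)) * c j) =ᶠ[nhds u₀]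
      fun u => ∑ j ∈ Finset.Icc ⌈u₀ - R - 1⌉ ⌊u₀ + R + 1⌋, ψ (u - (j:ℝ)) * c j) ∧
    (deriv (fun u => ∑' j : ℤ, ψ (u - (j:ℝ)) * c j) =ᶠ[nhds u₀]
      fun u => ∑ j ∈ Finset.Icc ⌈u₀ - R - 1⌉ ⌊u₀ + R + 1⌋, deriv ψ (u - (j:ℝ)) * c j) := by
  set S := Finset.Icc ⌈u₀ - R - 1⌉ ⌊u₀ + R + 1⌋ with hS
  have key : ∀ u : ℝ, |u - u₀| < 1 →
      (∑' j : ℤ, ψ (u - (j:ℝ)) * c j) = ∑ j ∈ S, ψ (u - (j:ℝ)) * c j := by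
    intro u hu
    apply tsum_eq_sum
    intro j hj
    rw [hS, Finset.mem_Icc] at hj
    push_neg at hj
    have hu1 : u₀ - 1 < u ∧ u < u₀ + 1 := by
      constructor <;> [linarith [neg_abs_le (u - u₀)]; linarith [le_abs_self (u - u₀)]]
    have : R < |u - (j:ℝ)| := by
      rcases lt_or_ge j ⌈u₀ - R - 1⌉ with hlt | hge
      · have h1 : (j:ℝ) < u₀ - R - 1 := Int.lt_ceil.mp hlt
        have : R < u - (j:ℝ) := by linarith [hu1.1]
        linarith [le_abs_self (u - (j:ℝ))]
      · have h2 : u₀ + R + 1 < (j:ℝ) := Int.floor_lt.mp (hj hge)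
        have : R < (j:ℝ) - u := by linarith [hu1.2]
        linarith [neg_abs_le (u - (j:ℝ))]
    rw [h0 _ this, zero_mul]
  have hψd : Differentiable ℝ ψ := hψ.differentiable (by norm_num)
  have hsum_d : ∀ u : ℝ, HasDerivAt (fun v => ∑ j ∈ S, ψ (v - (j:ℝ)) * c j)
      (∑ j ∈ S, deriv ψ (u - (j:ℝ)) * c j) u := by
    intro u
    apply HasDerivAt.fun_sum
    intro j _
    have h1 : HasDerivAt (fun v : ℝ => ψ (v - (j:ℝ))) (deriv ψ (u - (j:ℝ))) u := by
      simpa [Function.comp_def] using (hψd (u - (j:ℝ))).hasDerivAt.comp u ((hasDerivAt_id u).sub_const (j:ℝ))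
    simpa using h1.mul_const (c j)
  have h1 : (fun u => ∑' j : ℤ, ψ (u - (j:ℝ)) * c j) =ᶠ[nhds u₀]
      fun u => ∑ j ∈ S, ψ (u - (j:ℝ)) * c j := by
    filter_upwards [Metric.ball_mem_nhds u₀ one_pos] with u hu
    exact key u (by simpa [Real.dist_eq] using hu)
  refine ⟨h1, ?_⟩
  filter_upwards [Metric.ball_mem_nhds u₀ (by norm_num : (0:ℝ) < 1/2)] with u hu
  have h2 : (fun v => ∑' j : ℤ, ψ (v - (j:ℝ)) * c j) =ᶠ[nhds u]
      fun v => ∑ j ∈ S, ψ (v - (j:ℝ)) * c j := by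
    filter_upwards [Metric.ball_mem_nhds u (by norm_num : (0:ℝ) < 1/2)] with v hv
    apply key v
    rw [Metric.mem_ball, Real.dist_eq] at hu hv
    calc |v - u₀| ≤ |v - u| + |u - u₀| := abs_sub_le _ _ _
    _ < 1 := by linarith
  rw [h2.deriv_eq, (hsum_d u).deriv]

lemma aux_moments (φ : ℝ → ℝ) (hφ : ContDiff ℝ 2 φ) (R : ℝ)
    (hR : ∀ x : ℝ, R < |x| → φ x = 0)
    (c : ℤ → ℝ) (g dg : ℝ → ℝ)
    (hg : ∀ u : ℝ, (∑' j : ℤ, φ (u - (j:ℝ)) * c j) = g u)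
    (hdg : ∀ u : ℝ, HasDerivAt g (dg u) u)
    (hddg : ∀ u : ℝ, HasDerivAt dg 0 u) (u₀ : ℝ) :
    (∑ j ∈ Finset.Icc ⌈u₀-R-1⌉ ⌊u₀+R+1⌋, φ (u₀-(j:ℝ)) * c j = g u₀) ∧
    (∑ j ∈ Finset.Icc ⌈u₀-R-1⌉ ⌊u₀+R+1⌋, deriv φ (u₀-(j:ℝ)) * c j = dg u₀) ∧
    (∑ j ∈ Finset.Icc ⌈u₀-R-1⌉ ⌊u₀+R+1⌋, deriv (deriv φ) (u₀-(j:ℝ)) * c j = 0) := by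
  obtain ⟨ev1, ev2⟩ := aux_locfin φ hφ c R hR u₀
  have hgfun : (fun u => ∑' j : ℤ, φ (u - (j:ℝ)) * c j) = g := funext hg
  rw [hgfun] at ev1 ev2
  have hφd : Differentiable ℝ φ := hφ.differentiable (by norm_num)
  have hφd' : Differentiable ℝ (deriv φ) := by
    have h21 : (2 : WithTop ℕ∞) = 1 + 1 := by norm_num
    rw [h21] at hφ
    exact (contDiff_succ_iff_deriv.mp hφ).2.2.differentiable one_ne_zero
  refine ⟨(ev1.eq_of_nhds).symm, ?_, ?_⟩
  · have h1 : deriv g u₀ = dg u₀ := (hdg u₀).deriv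
    have h2 : deriv g u₀ = ∑ j ∈ Finset.Icc ⌈u₀-R-1⌉ ⌊u₀+R+1⌋, deriv φ (u₀-(j:ℝ)) * c j :=
      ev2.eq_of_nhds
    rw [← h2, h1]
  · have hgd : deriv g = dg := funext fun u => (hdg u).deriv
    have hFS : HasDerivAt (fun v => ∑ j ∈ Finset.Icc ⌈u₀-R-1⌉ ⌊u₀+R+1⌋, deriv φ (v-(j:ℝ)) * c j)
        (∑ j ∈ Finset.Icc ⌈u₀-R-1⌉ ⌊u₀+R+1⌋, deriv (deriv φ) (u₀-(j:ℝ)) * c j) u₀ := by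
      apply HasDerivAt.fun_sum
      intro j _
      have h1 : HasDerivAt (fun v : ℝ => deriv φ (v - (j:ℝ))) (deriv (deriv φ) (u₀ - (j:ℝ))) u₀ := by
        simpa [Function.comp_def] using (hφd' (u₀ - (j:ℝ))).hasDerivAt.comp u₀ ((hasDerivAt_id u₀).sub_const (j:ℝ))
      simpa using h1.mul_const (c j)
    have h3 : deriv (deriv g) u₀
        = ∑ j ∈ Finset.Icc ⌈u₀-R-1⌉ ⌊u₀+R+1⌋, deriv (deriv φ) (u₀-(j:ℝ)) * c j := by
      rw [ev2.deriv_eq, hFS.deriv]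
    rw [← h3, hgd, (hddg u₀).deriv]

lemma aux_hderiv (f : ℝ → ℝ) (hf : ContDiff ℝ 2 f) (ε q : ℝ) (x : ℝ) (hx : q < x) :
    HasDerivAt (fun y => f (ε*y) * Real.sqrt (y - q))
      (ε * deriv f (ε*x) * Real.sqrt (x-q) + f (ε*x) * (1/(2*Real.sqrt (x-q)))) x ∧
    HasDerivAt (fun y => ε * deriv f (ε*y) * Real.sqrt (y-q)
        + f (ε*y) * (1/(2*Real.sqrt (y-q))))
      (ε^2 * deriv (deriv f) (ε*x) * Real.sqrt (x-q)
        + ε * deriv f (ε*x) * (1/Real.sqrt (x-q))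
        - f (ε*x) * (1/(4*(x-q)*Real.sqrt (x-q)))) x := by
  obtain ⟨hfd, hfd'⟩ := aux_deriv_f' f hf
  have hxq : 0 < x - q := sub_pos.mpr hx
  have hsq : 0 < Real.sqrt (x - q) := Real.sqrt_pos.mpr hxq
  have hs : HasDerivAt (fun y : ℝ => Real.sqrt (y - q)) (1/(2*Real.sqrt (x-q))) x := by
    simpa [Function.comp_def] using (Real.hasDerivAt_sqrt (ne_of_gt hxq)).comp x ((hasDerivAt_id x).sub_const q)
  have hF : HasDerivAt (fun y : ℝ => f (ε*y)) (ε * deriv f (ε*x)) x := by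
    have := ((hfd (ε*x)).hasDerivAt).comp x ((hasDerivAt_id x).const_mul ε)
    simpa [mul_comm, Function.comp_def] using this
  have hF' : HasDerivAt (fun y : ℝ => deriv f (ε*y)) (ε * deriv (deriv f) (ε*x)) x := by
    have := ((hfd' (ε*x)).hasDerivAt).comp x ((hasDerivAt_id x).const_mul ε)
    simpa [mul_comm, Function.comp_def] using this
  refine ⟨hF.mul hs, ?_⟩
  have hss : Real.sqrt (x-q) * Real.sqrt (x-q) = x - q := Real.mul_self_sqrt hxq.le
  have hInv : HasDerivAt (fun y : ℝ => 1/(2*Real.sqrt (y-q)))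
      (-(1/(4*(x-q)*Real.sqrt (x-q)))) x := by
    have h2s : HasDerivAt (fun y : ℝ => 2*Real.sqrt (y-q)) (2*(1/(2*Real.sqrt (x-q)))) x :=
      hs.const_mul 2
    have hne : (2:ℝ)*Real.sqrt (x-q) ≠ 0 := by positivity
    have := h2s.inv hne
    have heq : -(2*(1/(2*Real.sqrt (x-q)))) / (2*Real.sqrt (x-q))^2
        = -(1/(4*(x-q)*Real.sqrt (x-q))) := by
      have e1 : (2*Real.sqrt (x-q))^2 = 4*(x-q) := by
        rw [mul_pow, Real.sq_sqrt hxq.le]; ring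
      have hsub : ∀ s a : ℝ, s ≠ 0 → a ≠ 0 → -(2*(1/(2*s)))/(4*a) = -(1/(4*a*s)) := by
        intro s a hs ha; field_simp
      rw [e1]; exact hsub _ _ (ne_of_gt hsq) (ne_of_gt hxq)
    rw [heq] at this
    exact this.congr_of_eventuallyEq (Filter.Eventually.of_forall fun y => by simp [one_div])
  have t1 : HasDerivAt (fun y : ℝ => ε * deriv f (ε*y)) (ε * (ε * deriv (deriv f) (ε*x))) x :=
    hF'.const_mul ε
  have main := (t1.mul hs).add (hF.mul hInv)
  rw [show ε^2 * deriv (deriv f) (ε*x) * Real.sqrt (x-q)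
        + ε * deriv f (ε*x) * (1/Real.sqrt (x-q))
        - f (ε*x) * (1/(4*(x-q)*Real.sqrt (x-q)))
      = ε * (ε * deriv (deriv f) (ε*x)) * Real.sqrt (x-q)
        + ε * deriv f (ε*x) * (1/(2*Real.sqrt (x-q)))
        + (ε * deriv f (ε*x) * (1/(2*Real.sqrt (x-q)))
          + f (ε*x) * -(1/(4*(x-q)*Real.sqrt (x-q)))) by ring]
  exact main

lemma aux_card (u R : ℝ) (hR : 0 ≤ R) :
    ((Finset.Icc ⌈u - R - 1⌉ ⌊u + R + 1⌋).card : ℝ) ≤ 2*R + 3 := by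
  rw [Int.card_Icc]
  rcases le_or_gt (⌊u + R + 1⌋ + 1 - ⌈u - R - 1⌉) 0 with h | h
  · rw [Int.toNat_of_nonpos h]
    push_cast; linarith
  · have h2 : (((⌊u + R + 1⌋ + 1 - ⌈u - R - 1⌉).toNat : ℤ) : ℝ)
        = ((⌊u + R + 1⌋ : ℝ) + 1 - (⌈u - R - 1⌉ : ℝ)) := by
      rw [Int.toNat_of_nonneg h.le]; push_cast; ring
    have h3 : ((⌊u + R + 1⌋ : ℝ)) ≤ u + R + 1 := Int.floor_le _
    have h4 : u - R - 1 ≤ ((⌈u - R - 1⌉ : ℝ)) := Int.le_ceil _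
    have : (((⌊u + R + 1⌋ + 1 - ⌈u - R - 1⌉).toNat : ℤ) : ℝ) ≤ 2*R+3 := by
      rw [h2]; linarith
    exact_mod_cast this

lemma aux_sum_abs_le {S : Finset ℤ} {w : ℤ → ℝ} {β : ℝ}
    (h : ∀ j ∈ S, |w j| ≤ β) : |∑ j ∈ S, w j| ≤ (S.card : ℝ) * β := by
  calc |∑ j ∈ S, w j| ≤ ∑ j ∈ S, |w j| := Finset.abs_sum_le_sum_abs _ _
  _ ≤ S.card • β := Finset.sum_le_card_nsmul _ _ _ h
  _ = (S.card : ℝ) * β := nsmul_eq_mul _ _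

lemma aux_combine (S : Finset ℤ) (w : ℤ → ℝ) (v : ℤ → ℝ) (a b u σ0 σ1 : ℝ)
    (s0 : ∑ j ∈ S, w j = σ0) (s1 : ∑ j ∈ S, (j:ℝ) * w j = σ1) :
    ∑ j ∈ S, w j * v j
      = (∑ j ∈ S, w j * (v j - a - ((j:ℝ) - u) * b)) + σ0 * a + (σ1 - u * σ0) * b := by
  have hterm : ∀ j ∈ S, w j * (v j - a - ((j:ℝ) - u) * b)
      = w j * v j - w j * a - ((j:ℝ) * w j) * b + u * (w j * b) := by intro j _; ring
  have e1 : ∑ j ∈ S, w j * a = σ0 * a := by rw [← Finset.sum_mul, s0]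
  have e2 : ∑ j ∈ S, ((j:ℝ) * w j) * b = σ1 * b := by rw [← Finset.sum_mul, s1]
  have e3 : ∑ j ∈ S, u * (w j * b) = u * (σ0 * b) := by
    rw [← Finset.mul_sum]
    congr 1
    rw [← Finset.sum_mul, s0]
  have main : (∑ j ∈ S, w j * (v j - a - ((j:ℝ) - u) * b))
      = (∑ j ∈ S, w j * v j) - σ0 * a - σ1 * b + u * (σ0 * b) := by
    rw [Finset.sum_congr rfl hterm, Finset.sum_add_distrib, Finset.sum_sub_distrib,
      Finset.sum_sub_distrib, e1, e2, e3]
  rw [main]; ring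

lemma aux_arith (A B ε t y sy st d0 d1 d2 : ℝ) (hB0 : 0 ≤ B) (hε0 : 0 < ε) (ht : 1 ≤ t)
    (hεt : ε*t ≤ A) (hy1 : t/2 ≤ y) (hy2 : y ≤ 2*t) (hsy0 : 0 < sy) (hst0 : 0 < st)
    (hstst : st*st = t) (hsysy : sy*sy = y)
    (h0 : |d0| ≤ B) (h1 : |d1| ≤ B) (h2 : |d2| ≤ B) :
    |ε^2 * d2 * sy + ε * d1 * (1/sy) - d0 * (1/(4*y*sy))|
      ≤ Real.sqrt 2 * (A^2 + A + 1) * B / (t * st) := by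
  have ht0 : (0:ℝ) < t := by linarith only [ht]
  have hy0 : (0:ℝ) < y := by linarith
  have h22 : Real.sqrt 2 * Real.sqrt 2 = 2 := Real.mul_self_sqrt (by norm_num)
  have hs2 : (0:ℝ) < Real.sqrt 2 := Real.sqrt_pos.mpr (by norm_num)
  have hA0 : (0:ℝ) < A := lt_of_lt_of_le (by positivity) hεt
  have hsy_up : sy ≤ Real.sqrt 2 * st := by
    nlinarith [mul_pos hs2 hst0]
  have hsy_lo : st ≤ Real.sqrt 2 * sy := by
    nlinarith [mul_pos hs2 hsy0]
  have e1 : |ε^2 * d2 * sy| ≤ ε^2 * B * sy := by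
    rw [abs_mul, abs_mul, abs_of_nonneg (sq_nonneg ε), abs_of_nonneg hsy0.le]
    exact mul_le_mul_of_nonneg_right (mul_le_mul_of_nonneg_left h2 (sq_nonneg ε)) hsy0.le
  have e2 : |ε * d1 * (1/sy)| ≤ ε * B * (1/sy) := by
    rw [abs_mul, abs_mul, abs_of_nonneg hε0.le,
      abs_of_nonneg (by positivity : (0:ℝ) ≤ 1/sy)]
    exact mul_le_mul_of_nonneg_right (mul_le_mul_of_nonneg_left h1 hε0.le) (by positivity)
  have e3 : |d0 * (1/(4*y*sy))| ≤ B * (1/(4*y*sy)) := by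
    rw [abs_mul, abs_of_nonneg (by positivity : (0:ℝ) ≤ 1/(4*y*sy))]
    exact mul_le_mul_of_nonneg_right h0 (by positivity)
  have habs : |ε^2 * d2 * sy + ε * d1 * (1/sy) - d0 * (1/(4*y*sy))|
      ≤ ε^2 * B * sy + ε * B * (1/sy) + B * (1/(4*y*sy)) := by
    have t1 : |ε^2 * d2 * sy + ε * d1 * (1/sy) - d0 * (1/(4*y*sy))|
        ≤ |ε^2 * d2 * sy + ε * d1 * (1/sy)| + |d0 * (1/(4*y*sy))| := abs_sub _ _
    have t2 : |ε^2 * d2 * sy + ε * d1 * (1/sy)| ≤ |ε^2 * d2 * sy| + |ε * d1 * (1/sy)| :=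
      abs_add_le _ _
    linarith
  have c1 : ε^2 * B * sy ≤ Real.sqrt 2 * (A^2*B) / (t*st) := by
    rw [le_div_iff₀ (by positivity)]
    have h1' : ε^2 * sy * (t*st) ≤ Real.sqrt 2 * A^2 := by
      have step1 : ε^2 * sy * (t*st) ≤ ε^2 * (Real.sqrt 2 * st) * (t*st) :=
        mul_le_mul_of_nonneg_right
          (mul_le_mul_of_nonneg_left hsy_up (sq_nonneg ε)) (by positivity)
      have step2 : ε^2 * (Real.sqrt 2 * st) * (t*st) = Real.sqrt 2 * ((ε*t)*(ε*t)) := by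
        linear_combination (Real.sqrt 2 * ε^2 * t) * hstst
      have step3 : (ε*t)*(ε*t) ≤ A*A := by nlinarith [mul_pos hε0 ht0]
      nlinarith [hs2.le]
    calc ε^2 * B * sy * (t*st) = B * (ε^2 * sy * (t*st)) := by ring
    _ ≤ B * (Real.sqrt 2 * A^2) := mul_le_mul_of_nonneg_left h1' hB0
    _ = Real.sqrt 2 * (A^2*B) := by ring
  have c2 : ε * B * (1/sy) ≤ Real.sqrt 2 * (A*B) / (t*st) := by
    rw [le_div_iff₀ (by positivity)]
    have step1 : ε * B * (1/sy) * (t*st) ≤ ε * B * (1/sy) * (t*(Real.sqrt 2 * sy)) := by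
      apply mul_le_mul_of_nonneg_left (mul_le_mul_of_nonneg_left hsy_lo ht0.le)
      positivity
    have step2 : ε * B * (1/sy) * (t*(Real.sqrt 2 * sy)) = Real.sqrt 2 * ((ε*t) * B) := by
      field_simp
    have step3 : Real.sqrt 2 * ((ε*t) * B) ≤ Real.sqrt 2 * (A * B) := by
      apply mul_le_mul_of_nonneg_left _ hs2.le
      exact mul_le_mul_of_nonneg_right hεt hB0
    linarith
  have c3 : B * (1/(4*y*sy)) ≤ Real.sqrt 2 * B / (t*st) := by
    rw [le_div_iff₀ (by positivity)]
    have h1' : t * st ≤ (2*y) * (Real.sqrt 2 * sy) :=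
      mul_le_mul (by linarith) hsy_lo hst0.le (by linarith)
    have hpos : (0:ℝ) < 4*y*sy := by positivity
    calc B * (1/(4*y*sy)) * (t*st) = B * ((t*st) / (4*y*sy)) := by ring
    _ ≤ B * Real.sqrt 2 := by
        apply mul_le_mul_of_nonneg_left _ hB0
        rw [div_le_iff₀ hpos]
        nlinarith [mul_nonneg (mul_nonneg hs2.le hy0.le) hsy0.le]
    _ = Real.sqrt 2 * B := by ring
  calc |ε^2 * d2 * sy + ε * d1 * (1/sy) - d0 * (1/(4*y*sy))|
      ≤ ε^2 * B * sy + ε * B * (1/sy) + B * (1/(4*y*sy)) := habs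
  _ ≤ Real.sqrt 2 * (A^2*B) / (t*st) + Real.sqrt 2 * (A*B) / (t*st)
      + Real.sqrt 2 * B / (t*st) := by linarith
  _ = Real.sqrt 2 * (A^2 + A + 1) * B / (t * st) := by ring

lemma aux_h2_bound (f : ℝ → ℝ) (B A ε q t : ℝ)
    (hB : ∀ x : ℝ, |f x| ≤ B ∧ |deriv f x| ≤ B ∧ |deriv (deriv f) x| ≤ B)
    (hε0 : 0 < ε) (ht : 1 ≤ t) (hεt : ε * t ≤ A) (x : ℝ)
    (hy1 : t/2 ≤ x - q) (hy2 : x - q ≤ 2*t) :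
    |ε^2 * deriv (deriv f) (ε*x) * Real.sqrt (x-q)
      + ε * deriv f (ε*x) * (1/Real.sqrt (x-q))
      - f (ε*x) * (1/(4*(x-q)*Real.sqrt (x-q)))|
    ≤ Real.sqrt 2 * (A^2 + A + 1) * B / (t * Real.sqrt t) := by
  have ht0 : (0:ℝ) < t := by linarith only [ht]
  have hy0 : (0:ℝ) < x - q := by linarith
  exact aux_arith A B ε t (x-q) (Real.sqrt (x-q)) (Real.sqrt t)
    (f (ε*x)) (deriv f (ε*x)) (deriv (deriv f) (ε*x))
    ((abs_nonneg _).trans (hB 0).1) hε0 ht hεt hy1 hy2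
    (Real.sqrt_pos.mpr hy0) (Real.sqrt_pos.mpr ht0)
    (Real.mul_self_sqrt ht0.le) (Real.mul_self_sqrt hy0.le)
    (hB _).1 (hB _).2.1 (hB _).2.2

lemma aux_sumFS_hasDeriv (ψ : ℝ → ℝ) (hψd : Differentiable ℝ ψ) (c : ℤ → ℝ)
    (S : Finset ℤ) (q v : ℝ) :
    HasDerivAt (fun s : ℝ => ∑ j ∈ S, ψ (s + q - (j:ℝ)) * c j)
      (∑ j ∈ S, deriv ψ (v + q - (j:ℝ)) * c j) v := by
  apply HasDerivAt.fun_sum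
  intro j _
  have h1 : HasDerivAt (fun s : ℝ => ψ (s + q - (j:ℝ))) (deriv ψ (v + q - (j:ℝ))) v := by
    simpa [Function.comp_def] using (hψd (v + q - (j:ℝ))).hasDerivAt.comp v
      (((hasDerivAt_id v).add_const q).sub_const ((j:ℝ)))
  simpa using h1.mul_const (c j)

lemma aux_sumFS_hasDeriv0 (ψ : ℝ → ℝ) (hψd : Differentiable ℝ ψ) (c : ℤ → ℝ)
    (S : Finset ℤ) (v : ℝ) :
    HasDerivAt (fun s : ℝ => ∑ j ∈ S, ψ (s - (j:ℝ)) * c j)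
      (∑ j ∈ S, deriv ψ (v - (j:ℝ)) * c j) v := by
  apply HasDerivAt.fun_sum
  intro j _
  have h1 : HasDerivAt (fun s : ℝ => ψ (s - (j:ℝ))) (deriv ψ (v - (j:ℝ))) v := by
    simpa [Function.comp_def] using (hψd (v - (j:ℝ))).hasDerivAt.comp v ((hasDerivAt_id v).sub_const ((j:ℝ)))
  simpa using h1.mul_const (c j)

/-- The interpolation error `E(t)` of the paper's auxiliary asymptotics lemma:
`E(t) = ∑_{j∈ℤ} φ(t + q − j) f(εj) (j − q)₊^{1/2} − f(ε(t+q)) t^{1/2}`. -/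
noncomputable def interpErr (φ f : ℝ → ℝ) (ε q t : ℝ) : ℝ :=
  (∑' j : ℤ, φ (t + q - (j : ℝ)) * f (ε * (j : ℝ)) * Real.sqrt (max ((j : ℝ) - q) 0))
    - f (ε * (t + q)) * Real.sqrt t

/-- Interpolating the samples `f(εj)(j − q)₊^{1/2}` with a compactly supported `C²`
kernel exact up to order one reproduces `f(ε(t+q)) t^{1/2}` up to `O(t^{−3/2})`
errors (also for the first two `t`-derivatives), uniformly in `ε ∈ (0,1]`,
`εt ≤ A`, `ε|q| ≤ A`. -/
theorem stmt_9 (A : ℝ) (hA : 0 < A) (f φ : ℝ → ℝ) (B : ℝ)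
    (hf : ContDiff ℝ 2 f)
    (hfb : ∀ x : ℝ, |f x| ≤ B ∧ |deriv f x| ≤ B ∧ |deriv (deriv f) x| ≤ B)
    (hφ_smooth : ContDiff ℝ 2 φ) (hφ_supp : HasCompactSupport φ)
    (hφ_sum : ∀ u : ℝ, ∑' j : ℤ, φ (u - (j : ℝ)) = 1)
    (hφ_lin : ∀ u : ℝ, ∑' j : ℤ, (j : ℝ) * φ (u - (j : ℝ)) = u) :
    ∃ C > 0, ∀ ε ∈ Set.Ioc (0:ℝ) 1, ∀ t : ℝ, 1 ≤ t → ε * t ≤ A →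
      ∀ q : ℝ, ε * |q| ≤ A →
        |interpErr φ f ε q t| ≤ C * t ^ (-(3:ℝ)/2) ∧
        |deriv (interpErr φ f ε q) t| ≤ C * t ^ (-(3:ℝ)/2) ∧
        |deriv (deriv (interpErr φ f ε q)) t| ≤ C * t ^ (-(3:ℝ)/2) := by
  classical
  -- regularity of φ and f
  have hφd : Differentiable ℝ φ := hφ_smooth.differentiable (by norm_num)
  have h21 : (2 : WithTop ℕ∞) = 1 + 1 := by norm_num
  have hφc1 : ContDiff ℝ 1 (deriv φ) := by
    have h := hφ_smooth
    rw [h21] at h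
    exact (contDiff_succ_iff_deriv.mp h).2.2
  have hφd' : Differentiable ℝ (deriv φ) := hφc1.differentiable one_ne_zero
  have hφdd_cont : Continuous (deriv (deriv φ)) := by
    have h10 : (1 : WithTop ℕ∞) = 0 + 1 := by norm_num
    have h := hφc1
    rw [h10] at h
    exact (contDiff_succ_iff_deriv.mp h).2.2.continuous
  obtain ⟨hfd, hfd'⟩ := aux_deriv_f' f hf
  -- uniform bounds for φ, φ', φ''
  obtain ⟨M0, hM0⟩ := hφ_smooth.continuous.bounded_above_of_compact_support hφ_supp
  obtain ⟨M1, hM1⟩ := hφd'.continuous.bounded_above_of_compact_support hφ_supp.deriv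
  obtain ⟨M2, hM2⟩ := hφdd_cont.bounded_above_of_compact_support hφ_supp.deriv.deriv
  set Mφ := max M0 (max M1 M2) with hMφdef
  have hbφ0 : ∀ x : ℝ, |φ x| ≤ Mφ := fun x => le_trans (hM0 x) (le_max_left _ _)
  have hbφ1 : ∀ x : ℝ, |deriv φ x| ≤ Mφ :=
    fun x => le_trans (hM1 x) (le_trans (le_max_left _ _) (le_max_right _ _))
  have hbφ2 : ∀ x : ℝ, |deriv (deriv φ) x| ≤ Mφ :=
    fun x => le_trans (hM2 x) (le_trans (le_max_right _ _) (le_max_right _ _))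
  have hMφ0 : 0 ≤ Mφ := (abs_nonneg _).trans (hbφ0 0)
  -- support radius
  obtain ⟨R₀, hR₀⟩ := hφ_supp.isBounded.subset_closedBall 0
  set R := max R₀ 1 with hRdef
  have hR1 : (1:ℝ) ≤ R := le_max_right _ _
  have hRφ : ∀ x : ℝ, R < |x| → φ x = 0 := by
    intro x hx
    apply image_eq_zero_of_notMem_tsupport
    intro hmem
    have h1 := hR₀ hmem
    rw [Metric.mem_closedBall, Real.dist_eq, sub_zero] at h1
    have : |x| ≤ R := h1.trans (le_max_left _ _)
    linarith
  have hB0 : 0 ≤ B := (abs_nonneg _).trans (hfb 0).1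
  -- constants
  set CM := Real.sqrt 2 * (A^2 + A + 1) * B with hCMdef
  have hCM0 : 0 ≤ CM := by
    rw [hCMdef]
    have hA1 : (0:ℝ) ≤ A^2 + A + 1 := by nlinarith only [sq_nonneg (2*A+1)]
    exact mul_nonneg (mul_nonneg (Real.sqrt_nonneg 2) hA1) hB0
  set CL1 := (2*R+3) * Mφ * ((R+2)*(R+2)) * CM with hCL1def
  have hCL10 : 0 ≤ CL1 := by
    rw [hCL1def]
    apply mul_nonneg _ hCM0
    apply mul_nonneg (mul_nonneg (by linarith only [hR1]) hMφ0)
    nlinarith only [sq_nonneg (R+2)]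
  set T0 := 2*R+4 with hT0def
  have hT01 : (1:ℝ) ≤ T0 := by rw [hT0def]; linarith only [hR1]
  set CS := (2*R+3) * Mφ * (B*(3*R+5)) + 2*B*(T0+1) with hCSdef
  have hCS0 : 0 ≤ CS := by
    rw [hCSdef]
    have h1 : 0 ≤ (2*R+3)*Mφ := mul_nonneg (by linarith only [hR1]) hMφ0
    have h2 : 0 ≤ B*(3*R+5) := mul_nonneg hB0 (by linarith only [hR1])
    have h3 := mul_nonneg h1 h2
    have h4 : (0:ℝ) ≤ B*(T0+1) := mul_nonneg hB0 (by linarith only [hT01])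
    linarith only [h3, h4]
  refine ⟨(CL1 + CM + CS + 1) * (T0^2+1), mul_pos (by linarith only [hCL10, hCM0, hCS0]) (by positivity), ?_⟩
  intro ε hε t ht hεt q hq
  obtain ⟨hε0, hε1⟩ := hε
  have ht0 : (0:ℝ) < t := by linarith only [ht]
  have hst0 : 0 < Real.sqrt t := Real.sqrt_pos.mpr ht0
  have hstst : Real.sqrt t * Real.sqrt t = t := Real.mul_self_sqrt ht0.le
  have hst1 : (1:ℝ) ≤ Real.sqrt t := by
    calc (1:ℝ) = Real.sqrt 1 := Real.sqrt_one.symm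
    _ ≤ Real.sqrt t := Real.sqrt_le_sqrt ht
  have hrpow : t ^ (-(3:ℝ)/2) = 1/(t*Real.sqrt t) := aux_rpow t ht0
  rw [hrpow]
  have hC_ge : CL1 + CM ≤ (CL1 + CM + CS + 1) * (T0^2+1) := by
    have hx : 0 ≤ (CL1+CM+CS+1) * T0^2 :=
      mul_nonneg (by linarith only [hCL10, hCM0, hCS0]) (sq_nonneg T0)
    nlinarith only [hx, hCS0]
  -- the sample coefficients
  set c : ℤ → ℝ := fun j => f (ε * (j:ℝ)) * Real.sqrt (max ((j:ℝ) - q) 0) with hcdef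
  have hceq : ∀ j : ℤ, c j = f (ε*(j:ℝ)) * Real.sqrt ((j:ℝ) - q) := by
    intro j
    simp only [hcdef]
    rw [aux_sqrt_max]
  -- window membership and cardinality
  have hjmem : ∀ j ∈ Finset.Icc ⌈t+q-R-1⌉ ⌊t+q+R+1⌋,
      t+q-R-1 ≤ (j:ℝ) ∧ (j:ℝ) ≤ t+q+R+1 := by
    intro j hj
    rw [Finset.mem_Icc] at hj
    constructor
    · calc t+q-R-1 ≤ ((⌈t+q-R-1⌉ : ℤ) : ℝ) := Int.le_ceil _
      _ ≤ (j:ℝ) := by exact_mod_cast hj.1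
    · calc (j:ℝ) ≤ ((⌊t+q+R+1⌋ : ℤ) : ℝ) := by exact_mod_cast hj.2
      _ ≤ t+q+R+1 := Int.floor_le _
  have hcard : ((Finset.Icc ⌈t+q-R-1⌉ ⌊t+q+R+1⌋).card : ℝ) ≤ 2*R+3 :=
    aux_card (t+q) R (by linarith only [hR1])
  -- moment identities
  obtain ⟨mA0, mB0, mC0⟩ := aux_moments φ hφ_smooth R hRφ (fun _ => (1:ℝ))
    (fun _ => (1:ℝ)) (fun _ => (0:ℝ))
    (fun v => by
      show (∑' j : ℤ, φ (v - (j:ℝ)) * 1) = 1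
      simpa using hφ_sum v)
    (fun v => hasDerivAt_const v 1) (fun v => hasDerivAt_const v 0) (t+q)
  obtain ⟨mA1, mB1, mC1⟩ := aux_moments φ hφ_smooth R hRφ (fun j : ℤ => ((j:ℝ)))
    (fun v => v) (fun _ => (1:ℝ))
    (fun v => by
      show (∑' j : ℤ, φ (v - (j:ℝ)) * (j:ℝ)) = v
      rw [show (fun j : ℤ => φ (v - (j:ℝ)) * (j:ℝ))
          = fun j : ℤ => (j:ℝ) * φ (v - (j:ℝ)) from funext fun j => mul_comm _ _]
      exact hφ_lin v)
    (fun v => hasDerivAt_id v) (fun v => hasDerivAt_const v 1) (t+q)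
  have sA0 : ∑ j ∈ Finset.Icc ⌈t+q-R-1⌉ ⌊t+q+R+1⌋, φ (t+q-(j:ℝ)) = 1 := by
    simpa using mA0
  have sB0 : ∑ j ∈ Finset.Icc ⌈t+q-R-1⌉ ⌊t+q+R+1⌋, deriv φ (t+q-(j:ℝ)) = 0 := by
    simpa using mB0
  have sC0 : ∑ j ∈ Finset.Icc ⌈t+q-R-1⌉ ⌊t+q+R+1⌋, deriv (deriv φ) (t+q-(j:ℝ)) = 0 := by
    simpa using mC0
  have sA1 : ∑ j ∈ Finset.Icc ⌈t+q-R-1⌉ ⌊t+q+R+1⌋, (j:ℝ) * φ (t+q-(j:ℝ)) = t+q := by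
    calc ∑ j ∈ Finset.Icc ⌈t+q-R-1⌉ ⌊t+q+R+1⌋, (j:ℝ) * φ (t+q-(j:ℝ))
        = ∑ j ∈ Finset.Icc ⌈t+q-R-1⌉ ⌊t+q+R+1⌋, φ (t+q-(j:ℝ)) * (j:ℝ) :=
          Finset.sum_congr rfl fun j _ => mul_comm _ _
    _ = t+q := mA1
  have sB1 : ∑ j ∈ Finset.Icc ⌈t+q-R-1⌉ ⌊t+q+R+1⌋, (j:ℝ) * deriv φ (t+q-(j:ℝ)) = 1 := by
    calc ∑ j ∈ Finset.Icc ⌈t+q-R-1⌉ ⌊t+q+R+1⌋, (j:ℝ) * deriv φ (t+q-(j:ℝ))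
        = ∑ j ∈ Finset.Icc ⌈t+q-R-1⌉ ⌊t+q+R+1⌋, deriv φ (t+q-(j:ℝ)) * (j:ℝ) :=
          Finset.sum_congr rfl fun j _ => mul_comm _ _
    _ = 1 := mB1
  have sC1 : ∑ j ∈ Finset.Icc ⌈t+q-R-1⌉ ⌊t+q+R+1⌋,
      (j:ℝ) * deriv (deriv φ) (t+q-(j:ℝ)) = 0 := by
    calc ∑ j ∈ Finset.Icc ⌈t+q-R-1⌉ ⌊t+q+R+1⌋, (j:ℝ) * deriv (deriv φ) (t+q-(j:ℝ))
        = ∑ j ∈ Finset.Icc ⌈t+q-R-1⌉ ⌊t+q+R+1⌋, deriv (deriv φ) (t+q-(j:ℝ)) * (j:ℝ) :=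
          Finset.sum_congr rfl fun j _ => mul_comm _ _
    _ = 0 := mC1
  -- localization
  obtain ⟨ev1, ev2⟩ := aux_locfin φ hφ_smooth c R hRφ (t+q)
  -- basic function identity
  have hIE : interpErr φ f ε q = fun s =>
      (∑' j : ℤ, φ (s + q - (j:ℝ)) * c j) - f (ε*(s+q)) * Real.sqrt s := by
    funext s
    simp only [interpErr]
    congr 1
    exact tsum_congr fun j => by simp only [hcdef]; ring
  -- differentiability of G everywhere
  have hGdiff : ∀ v : ℝ, DifferentiableAt ℝ (fun w => ∑' j : ℤ, φ (w - (j:ℝ)) * c j) v := by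
    intro v
    obtain ⟨e1, -⟩ := aux_locfin φ hφ_smooth c R hRφ v
    exact (aux_sumFS_hasDeriv0 φ hφd c _ v).differentiableAt.congr_of_eventuallyEq e1
  have htend : Filter.Tendsto (fun s : ℝ => s + q) (nhds t) (nhds (t+q)) :=
    (continuous_id.add continuous_const).tendsto' t (t+q) rfl
  -- derivative helpers for the K part
  have hKd : ∀ s : ℝ, 0 < s → HasDerivAt (fun y : ℝ => f (ε*(y+q)) * Real.sqrt y)
      (ε * deriv f (ε*(s+q)) * Real.sqrt s + f (ε*(s+q)) * (1/(2*Real.sqrt s))) s := by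
    intro s hs
    have h := (aux_hderiv f hf ε q (s+q) (by linarith only [hs])).1
    have h2 := h.comp s ((hasDerivAt_id s).add_const q)
    simpa [Function.comp_def, add_sub_cancel_right] using h2
  have hK1d : ∀ s : ℝ, 0 < s → HasDerivAt
      (fun y : ℝ => ε * deriv f (ε*(y+q)) * Real.sqrt y + f (ε*(y+q)) * (1/(2*Real.sqrt y)))
      (ε^2 * deriv (deriv f) (ε*(s+q)) * Real.sqrt s + ε * deriv f (ε*(s+q)) * (1/Real.sqrt s)
        - f (ε*(s+q)) * (1/(4*s*Real.sqrt s))) s := by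
    intro s hs
    have h := (aux_hderiv f hf ε q (s+q) (by linarith only [hs])).2
    have h2 := h.comp s ((hasDerivAt_id s).add_const q)
    simpa [Function.comp_def, add_sub_cancel_right] using h2
  -- identity for the value
  have I0 : interpErr φ f ε q t
      = (∑ j ∈ Finset.Icc ⌈t+q-R-1⌉ ⌊t+q+R+1⌋, φ (t+q-(j:ℝ)) * c j)
        - f (ε*(t+q)) * Real.sqrt t := by
    have h : (∑' j : ℤ, φ (t + q - (j:ℝ)) * c j)
        = ∑ j ∈ Finset.Icc ⌈t+q-R-1⌉ ⌊t+q+R+1⌋, φ (t+q-(j:ℝ)) * c j := ev1.eq_of_nhds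
    rw [hIE]
    show (∑' j : ℤ, φ (t + q - (j:ℝ)) * c j) - f (ε*(t+q)) * Real.sqrt t = _
    rw [h]
  -- identity for the first derivative
  have hGq_dat : HasDerivAt (fun s : ℝ => ∑' j : ℤ, φ (s + q - (j:ℝ)) * c j)
      (∑ j ∈ Finset.Icc ⌈t+q-R-1⌉ ⌊t+q+R+1⌋, deriv φ (t+q-(j:ℝ)) * c j) t := by
    have hev : (fun s : ℝ => ∑' j : ℤ, φ (s + q - (j:ℝ)) * c j) =ᶠ[nhds t]
        (fun s : ℝ => ∑ j ∈ Finset.Icc ⌈t+q-R-1⌉ ⌊t+q+R+1⌋, φ (s + q - (j:ℝ)) * c j) :=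
      htend.eventually ev1
    exact (aux_sumFS_hasDeriv φ hφd c _ q t).congr_of_eventuallyEq hev
  have I1 : deriv (interpErr φ f ε q) t
      = (∑ j ∈ Finset.Icc ⌈t+q-R-1⌉ ⌊t+q+R+1⌋, deriv φ (t+q-(j:ℝ)) * c j)
        - (ε * deriv f (ε*(t+q)) * Real.sqrt t + f (ε*(t+q)) * (1/(2*Real.sqrt t))) := by
    rw [hIE]
    exact (hGq_dat.sub (hKd t ht0)).deriv
  -- identity for the second derivative
  have hDIE : ∀ s : ℝ, 0 < s → deriv (interpErr φ f ε q) s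
      = deriv (fun w => ∑' j : ℤ, φ (w - (j:ℝ)) * c j) (s+q)
        - (ε * deriv f (ε*(s+q)) * Real.sqrt s + f (ε*(s+q)) * (1/(2*Real.sqrt s))) := by
    intro s hs
    rw [hIE]
    have hd1 : DifferentiableAt ℝ (fun y : ℝ => ∑' j : ℤ, φ (y + q - (j:ℝ)) * c j) s := by
      obtain ⟨e1s, -⟩ := aux_locfin φ hφ_smooth c R hRφ (s+q)
      have htends : Filter.Tendsto (fun y : ℝ => y + q) (nhds s) (nhds (s+q)) :=
        (continuous_id.add continuous_const).tendsto' s (s+q) rfl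
      have hev : (fun y : ℝ => ∑' j : ℤ, φ (y + q - (j:ℝ)) * c j) =ᶠ[nhds s]
          (fun y : ℝ => ∑ j ∈ Finset.Icc ⌈s+q-R-1⌉ ⌊s+q+R+1⌋, φ (y + q - (j:ℝ)) * c j) :=
        htends.eventually e1s
      exact ((aux_sumFS_hasDeriv φ hφd c _ q s).congr_of_eventuallyEq hev).differentiableAt
    have hd2 : DifferentiableAt ℝ (fun y : ℝ => f (ε*(y+q)) * Real.sqrt y) s :=
      (hKd s hs).differentiableAt
    rw [deriv_fun_sub hd1 hd2, (hKd s hs).deriv]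
    congr 1
    exact deriv_comp_add_const (fun w => ∑' j : ℤ, φ (w - (j:ℝ)) * c j) q s
  have hDGq : HasDerivAt (fun s : ℝ => deriv (fun w => ∑' j : ℤ, φ (w - (j:ℝ)) * c j) (s+q))
      (∑ j ∈ Finset.Icc ⌈t+q-R-1⌉ ⌊t+q+R+1⌋, deriv (deriv φ) (t+q-(j:ℝ)) * c j) t := by
    have hev2 : (fun s : ℝ => deriv (fun w => ∑' j : ℤ, φ (w - (j:ℝ)) * c j) (s+q)) =ᶠ[nhds t]
        (fun s : ℝ => ∑ j ∈ Finset.Icc ⌈t+q-R-1⌉ ⌊t+q+R+1⌋, deriv φ (s + q - (j:ℝ)) * c j) :=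
      htend.eventually ev2
    exact (aux_sumFS_hasDeriv (deriv φ) hφd' c _ q t).congr_of_eventuallyEq hev2
  have I2 : deriv (deriv (interpErr φ f ε q)) t
      = (∑ j ∈ Finset.Icc ⌈t+q-R-1⌉ ⌊t+q+R+1⌋, deriv (deriv φ) (t+q-(j:ℝ)) * c j)
        - (ε^2 * deriv (deriv f) (ε*(t+q)) * Real.sqrt t
            + ε * deriv f (ε*(t+q)) * (1/Real.sqrt t)
            - f (ε*(t+q)) * (1/(4*t*Real.sqrt t))) := by
    have hev : deriv (interpErr φ f ε q) =ᶠ[nhds t]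
        (fun s => deriv (fun w => ∑' j : ℤ, φ (w - (j:ℝ)) * c j) (s+q)
          - (ε * deriv f (ε*(s+q)) * Real.sqrt s + f (ε*(s+q)) * (1/(2*Real.sqrt s)))) := by
      filter_upwards [isOpen_Ioi.mem_nhds (show t ∈ Set.Ioi (0:ℝ) from ht0)] with s hs
      exact hDIE s hs
    rw [hev.deriv_eq]
    exact (hDGq.sub (hK1d t ht0)).deriv
  have euq : t + q - q = t := add_sub_cancel_right t q
  rcases le_or_gt (2*R+4) t with hlarge | hsmall
  · -- LARGE t case
    have hd1 : ∀ x ∈ Set.Ioo (t+q-(R+2)) (t+q+(R+2)),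
        HasDerivAt (fun y => f (ε*y) * Real.sqrt (y - q))
          (ε * deriv f (ε*x) * Real.sqrt (x-q) + f (ε*x) * (1/(2*Real.sqrt (x-q)))) x := by
      intro x hx
      have hq' : q < x := by have h := hx.1; linarith only [h, hlarge, hR1]
      exact (aux_hderiv f hf ε q x hq').1
    have hd2 : ∀ x ∈ Set.Ioo (t+q-(R+2)) (t+q+(R+2)),
        HasDerivAt (fun x => ε * deriv f (ε*x) * Real.sqrt (x-q)
            + f (ε*x) * (1/(2*Real.sqrt (x-q))))
          (ε^2 * deriv (deriv f) (ε*x) * Real.sqrt (x-q)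
            + ε * deriv f (ε*x) * (1/Real.sqrt (x-q))
            - f (ε*x) * (1/(4*(x-q)*Real.sqrt (x-q)))) x := by
      intro x hx
      have hq' : q < x := by have h := hx.1; linarith only [h, hlarge, hR1]
      exact (aux_hderiv f hf ε q x hq').2
    have hM : ∀ x ∈ Set.Ioo (t+q-(R+2)) (t+q+(R+2)),
        |ε^2 * deriv (deriv f) (ε*x) * Real.sqrt (x-q)
          + ε * deriv f (ε*x) * (1/Real.sqrt (x-q))
          - f (ε*x) * (1/(4*(x-q)*Real.sqrt (x-q)))| ≤ CM / (t*Real.sqrt t) := by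
      intro x hx
      rw [hCMdef]
      exact aux_h2_bound f B A ε q t hfb hε0 ht hεt x
        (by have h := hx.1; linarith only [h, hlarge])
        (by have h := hx.2; linarith only [h, hlarge, hR1])
    have hr : ∀ x ∈ Set.Ioo (t+q-(R+2)) (t+q+(R+2)), |x - (t+q)| ≤ R+2 := by
      intro x hx
      rw [abs_le]
      exact ⟨by have h := hx.1; linarith only [h], by have h := hx.2; linarith only [h]⟩
    have humem : t+q ∈ Set.Ioo (t+q-(R+2)) (t+q+(R+2)) :=
      ⟨by linarith only [hR1], by linarith only [hR1]⟩
    have htay : ∀ j ∈ Finset.Icc ⌈t+q-R-1⌉ ⌊t+q+R+1⌋,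
        |f (ε*(j:ℝ)) * Real.sqrt ((j:ℝ)-q) - f (ε*(t+q)) * Real.sqrt (t+q-q)
          - ((j:ℝ)-(t+q)) * (ε * deriv f (ε*(t+q)) * Real.sqrt (t+q-q)
              + f (ε*(t+q)) * (1/(2*Real.sqrt (t+q-q))))|
        ≤ CM / (t*Real.sqrt t) * (R+2) * (R+2) := by
      intro j hj
      obtain ⟨hj1, hj2⟩ := hjmem j hj
      exact aux_taylor2 (convex_Ioo _ _) hd1 hd2 hM hr humem
        ⟨by linarith only [hj1], by linarith only [hj2]⟩
    simp only [euq] at htay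
    -- generic bound for remainder sums
    have hsum_rem : ∀ w : ℤ → ℝ, (∀ j : ℤ, |w j| ≤ Mφ) →
        |∑ j ∈ Finset.Icc ⌈t+q-R-1⌉ ⌊t+q+R+1⌋,
          w j * (f (ε*(j:ℝ)) * Real.sqrt ((j:ℝ)-q) - f (ε*(t+q)) * Real.sqrt t
            - ((j:ℝ)-(t+q)) * (ε * deriv f (ε*(t+q)) * Real.sqrt t
                + f (ε*(t+q)) * (1/(2*Real.sqrt t))))|
        ≤ CL1 * (1/(t*Real.sqrt t)) := by
      intro w hw
      have htayb0 : 0 ≤ CM / (t*Real.sqrt t) * (R+2) * (R+2) := by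
        apply mul_nonneg (mul_nonneg (div_nonneg hCM0 (by positivity)) (by linarith only [hR1]))
        linarith only [hR1]
      have h1 := aux_sum_abs_le (S := Finset.Icc ⌈t+q-R-1⌉ ⌊t+q+R+1⌋)
        (β := Mφ * (CM / (t*Real.sqrt t) * (R+2) * (R+2)))
        (w := fun j => w j * (f (ε*(j:ℝ)) * Real.sqrt ((j:ℝ)-q)
          - f (ε*(t+q)) * Real.sqrt t
          - ((j:ℝ)-(t+q)) * (ε * deriv f (ε*(t+q)) * Real.sqrt t
              + f (ε*(t+q)) * (1/(2*Real.sqrt t)))))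
        (fun j hj => by
          rw [abs_mul]
          exact mul_le_mul (hw j) (htay j hj) (abs_nonneg _) hMφ0)
      calc |∑ j ∈ Finset.Icc ⌈t+q-R-1⌉ ⌊t+q+R+1⌋,
          w j * (f (ε*(j:ℝ)) * Real.sqrt ((j:ℝ)-q) - f (ε*(t+q)) * Real.sqrt t
            - ((j:ℝ)-(t+q)) * (ε * deriv f (ε*(t+q)) * Real.sqrt t
                + f (ε*(t+q)) * (1/(2*Real.sqrt t))))|
          ≤ ((Finset.Icc ⌈t+q-R-1⌉ ⌊t+q+R+1⌋).card : ℝ)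
            * (Mφ * (CM / (t*Real.sqrt t) * (R+2) * (R+2))) := h1
      _ ≤ (2*R+3) * (Mφ * (CM / (t*Real.sqrt t) * (R+2) * (R+2))) :=
          mul_le_mul_of_nonneg_right hcard (mul_nonneg hMφ0 htayb0)
      _ = CL1 * (1/(t*Real.sqrt t)) := by rw [hCL1def]; ring
    have hfin : ∀ X : ℝ, X ≤ CL1 + CM →
        X * (1/(t*Real.sqrt t)) ≤ (CL1 + CM + CS + 1) * (T0^2+1) * (1/(t*Real.sqrt t)) := by
      intro X hX
      apply mul_le_mul_of_nonneg_right _ (by positivity)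
      linarith only [hC_ge, hX]
    refine ⟨?_, ?_, ?_⟩
    · -- value bound
      have hcs : (∑ j ∈ Finset.Icc ⌈t+q-R-1⌉ ⌊t+q+R+1⌋, φ (t+q-(j:ℝ)) * c j)
          = ∑ j ∈ Finset.Icc ⌈t+q-R-1⌉ ⌊t+q+R+1⌋, φ (t+q-(j:ℝ)) * (f (ε*(j:ℝ)) * Real.sqrt ((j:ℝ)-q)) :=
        Finset.sum_congr rfl fun j _ => by rw [hceq j]
      have comb : (∑ j ∈ Finset.Icc ⌈t+q-R-1⌉ ⌊t+q+R+1⌋, φ (t+q-(j:ℝ)) * (f (ε*(j:ℝ)) * Real.sqrt ((j:ℝ)-q)))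
          = (∑ j ∈ Finset.Icc ⌈t+q-R-1⌉ ⌊t+q+R+1⌋,
            φ (t+q-(j:ℝ)) * (f (ε*(j:ℝ)) * Real.sqrt ((j:ℝ)-q)
              - f (ε*(t+q)) * Real.sqrt t
              - ((j:ℝ)-(t+q)) * (ε * deriv f (ε*(t+q)) * Real.sqrt t + f (ε*(t+q)) * (1/(2*Real.sqrt t)))))
            + 1 * (f (ε*(t+q)) * Real.sqrt t)
            + ((t+q) - (t+q) * 1) * (ε * deriv f (ε*(t+q)) * Real.sqrt t + f (ε*(t+q)) * (1/(2*Real.sqrt t))) :=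
        aux_combine _ _ _ _ _ _ _ _ sA0 sA1
      have hval : interpErr φ f ε q t
          = ∑ j ∈ Finset.Icc ⌈t+q-R-1⌉ ⌊t+q+R+1⌋,
            φ (t+q-(j:ℝ)) * (f (ε*(j:ℝ)) * Real.sqrt ((j:ℝ)-q)
              - f (ε*(t+q)) * Real.sqrt t
              - ((j:ℝ)-(t+q)) * (ε * deriv f (ε*(t+q)) * Real.sqrt t + f (ε*(t+q)) * (1/(2*Real.sqrt t)))) := by
        rw [I0, hcs, comb]; ring
      rw [hval]
      refine le_trans (hsum_rem _ (fun j => hbφ0 _)) ?_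
      exact hfin CL1 (by linarith only [hCM0])
    · -- first derivative bound
      have hcs : (∑ j ∈ Finset.Icc ⌈t+q-R-1⌉ ⌊t+q+R+1⌋, deriv φ (t+q-(j:ℝ)) * c j)
          = ∑ j ∈ Finset.Icc ⌈t+q-R-1⌉ ⌊t+q+R+1⌋, deriv φ (t+q-(j:ℝ)) * (f (ε*(j:ℝ)) * Real.sqrt ((j:ℝ)-q)) :=
        Finset.sum_congr rfl fun j _ => by rw [hceq j]
      have comb : (∑ j ∈ Finset.Icc ⌈t+q-R-1⌉ ⌊t+q+R+1⌋, deriv φ (t+q-(j:ℝ)) * (f (ε*(j:ℝ)) * Real.sqrt ((j:ℝ)-q)))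
          = (∑ j ∈ Finset.Icc ⌈t+q-R-1⌉ ⌊t+q+R+1⌋,
            deriv φ (t+q-(j:ℝ)) * (f (ε*(j:ℝ)) * Real.sqrt ((j:ℝ)-q)
              - f (ε*(t+q)) * Real.sqrt t
              - ((j:ℝ)-(t+q)) * (ε * deriv f (ε*(t+q)) * Real.sqrt t + f (ε*(t+q)) * (1/(2*Real.sqrt t)))))
            + 0 * (f (ε*(t+q)) * Real.sqrt t)
            + (1 - (t+q) * 0) * (ε * deriv f (ε*(t+q)) * Real.sqrt t + f (ε*(t+q)) * (1/(2*Real.sqrt t))) :=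
        aux_combine _ _ _ _ _ _ _ _ sB0 sB1
      have hval : deriv (interpErr φ f ε q) t
          = ∑ j ∈ Finset.Icc ⌈t+q-R-1⌉ ⌊t+q+R+1⌋,
            deriv φ (t+q-(j:ℝ)) * (f (ε*(j:ℝ)) * Real.sqrt ((j:ℝ)-q)
              - f (ε*(t+q)) * Real.sqrt t
              - ((j:ℝ)-(t+q)) * (ε * deriv f (ε*(t+q)) * Real.sqrt t + f (ε*(t+q)) * (1/(2*Real.sqrt t)))) := by
        rw [I1, hcs, comb]; ring
      rw [hval]
      refine le_trans (hsum_rem _ (fun j => hbφ1 _)) ?_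
      exact hfin CL1 (by linarith only [hCM0])
    · -- second derivative bound
      have hK2b : |ε^2 * deriv (deriv f) (ε*(t+q)) * Real.sqrt t
          + ε * deriv f (ε*(t+q)) * (1/Real.sqrt t)
          - f (ε*(t+q)) * (1/(4*t*Real.sqrt t))| ≤ CM / (t*Real.sqrt t) := by
        have h1 := aux_h2_bound f B A ε q t hfb hε0 ht hεt (t+q)
          (by linarith only [ht0]) (by linarith only [ht0])
        simp only [euq] at h1
        rw [hCMdef]
        exact h1
      have hcs : (∑ j ∈ Finset.Icc ⌈t+q-R-1⌉ ⌊t+q+R+1⌋, deriv (deriv φ) (t+q-(j:ℝ)) * c j)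
          = ∑ j ∈ Finset.Icc ⌈t+q-R-1⌉ ⌊t+q+R+1⌋, deriv (deriv φ) (t+q-(j:ℝ)) * (f (ε*(j:ℝ)) * Real.sqrt ((j:ℝ)-q)) :=
        Finset.sum_congr rfl fun j _ => by rw [hceq j]
      have comb : (∑ j ∈ Finset.Icc ⌈t+q-R-1⌉ ⌊t+q+R+1⌋, deriv (deriv φ) (t+q-(j:ℝ)) * (f (ε*(j:ℝ)) * Real.sqrt ((j:ℝ)-q)))
          = (∑ j ∈ Finset.Icc ⌈t+q-R-1⌉ ⌊t+q+R+1⌋,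
            deriv (deriv φ) (t+q-(j:ℝ)) * (f (ε*(j:ℝ)) * Real.sqrt ((j:ℝ)-q)
              - f (ε*(t+q)) * Real.sqrt t
              - ((j:ℝ)-(t+q)) * (ε * deriv f (ε*(t+q)) * Real.sqrt t + f (ε*(t+q)) * (1/(2*Real.sqrt t)))))
            + 0 * (f (ε*(t+q)) * Real.sqrt t)
            + (0 - (t+q) * 0) * (ε * deriv f (ε*(t+q)) * Real.sqrt t + f (ε*(t+q)) * (1/(2*Real.sqrt t))) :=
        aux_combine _ _ _ _ _ _ _ _ sC0 sC1
      have hval : deriv (deriv (interpErr φ f ε q)) t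
          = (∑ j ∈ Finset.Icc ⌈t+q-R-1⌉ ⌊t+q+R+1⌋,
            deriv (deriv φ) (t+q-(j:ℝ)) * (f (ε*(j:ℝ)) * Real.sqrt ((j:ℝ)-q)
              - f (ε*(t+q)) * Real.sqrt t
              - ((j:ℝ)-(t+q)) * (ε * deriv f (ε*(t+q)) * Real.sqrt t + f (ε*(t+q)) * (1/(2*Real.sqrt t))))) - (ε^2 * deriv (deriv f) (ε*(t+q)) * Real.sqrt t + ε * deriv f (ε*(t+q)) * (1/Real.sqrt t) - f (ε*(t+q)) * (1/(4*t*Real.sqrt t))) := by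
        rw [I2, hcs, comb]; ring
      rw [hval]
      refine le_trans (abs_sub _ _) ?_
      refine le_trans (add_le_add (hsum_rem _ (fun j => hbφ2 _)) hK2b) ?_
      have heq : CL1 * (1/(t*Real.sqrt t)) + CM / (t*Real.sqrt t)
          = (CL1 + CM) * (1/(t*Real.sqrt t)) := by ring
      rw [heq]
      exact hfin (CL1 + CM) le_rfl

  · -- SMALL t case
    have hsqt_le : Real.sqrt t ≤ T0 := by
      calc Real.sqrt t ≤ t := aux_sqrt_le t ht
      _ ≤ T0 := by rw [hT0def]; linarith only [hsmall]
    have hcb : ∀ j ∈ Finset.Icc ⌈t+q-R-1⌉ ⌊t+q+R+1⌋, |c j| ≤ B*(3*R+5) := by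
      intro j hj
      rw [hceq j, abs_mul]
      have h2 : |Real.sqrt ((j:ℝ)-q)| ≤ 3*R+5 := by
        rw [abs_of_nonneg (Real.sqrt_nonneg _)]
        have h3 : (j:ℝ) - q ≤ 3*R+5 := by
          have h := (hjmem j hj).2; linarith only [h, hsmall]
        calc Real.sqrt ((j:ℝ)-q) ≤ Real.sqrt (3*R+5) := Real.sqrt_le_sqrt h3
        _ ≤ 3*R+5 := aux_sqrt_le _ (by linarith only [hR1])
      exact mul_le_mul (hfb _).1 h2 (abs_nonneg _) hB0
    have hsum_small : ∀ w : ℤ → ℝ, (∀ j : ℤ, |w j| ≤ Mφ) →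
        |∑ j ∈ Finset.Icc ⌈t+q-R-1⌉ ⌊t+q+R+1⌋, w j * c j|
          ≤ (2*R+3) * Mφ * (B*(3*R+5)) := by
      intro w hw
      have h1 := aux_sum_abs_le (S := Finset.Icc ⌈t+q-R-1⌉ ⌊t+q+R+1⌋)
        (β := Mφ * (B*(3*R+5))) (w := fun j => w j * c j)
        (fun j hj => by
          rw [abs_mul]
          exact mul_le_mul (hw j) (hcb j hj) (abs_nonneg _) hMφ0)
      calc |∑ j ∈ Finset.Icc ⌈t+q-R-1⌉ ⌊t+q+R+1⌋, w j * c j|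
          ≤ ((Finset.Icc ⌈t+q-R-1⌉ ⌊t+q+R+1⌋).card : ℝ) * (Mφ * (B*(3*R+5))) := h1
      _ ≤ (2*R+3) * (Mφ * (B*(3*R+5))) := mul_le_mul_of_nonneg_right hcard
            (mul_nonneg hMφ0 (mul_nonneg hB0 (by linarith only [hR1])))
      _ = (2*R+3) * Mφ * (B*(3*R+5)) := by ring
    have hKb : |f (ε*(t+q)) * Real.sqrt t| ≤ 2*B*(T0+1) := by
      rw [abs_mul, abs_of_nonneg (Real.sqrt_nonneg t)]
      calc |f (ε*(t+q))| * Real.sqrt t ≤ B * T0 :=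
        mul_le_mul (hfb _).1 hsqt_le (Real.sqrt_nonneg _) hB0
      _ ≤ 2*B*(T0+1) := by
          have hBT0 : (0:ℝ) ≤ B*T0 := mul_nonneg hB0 (by linarith only [hT01])
          linarith only [hBT0, hB0]
    have hK1b : |ε * deriv f (ε*(t+q)) * Real.sqrt t + f (ε*(t+q)) * (1/(2*Real.sqrt t))|
        ≤ 2*B*(T0+1) := by
      have e1 : |ε * deriv f (ε*(t+q)) * Real.sqrt t| ≤ B*T0 := by
        rw [abs_mul, abs_mul, abs_of_nonneg hε0.le, abs_of_nonneg (Real.sqrt_nonneg t)]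
        calc ε * |deriv f (ε*(t+q))| * Real.sqrt t
            ≤ 1 * B * T0 := by
              apply mul_le_mul _ hsqt_le (Real.sqrt_nonneg _)
              · exact mul_nonneg (by linarith only [hB0]) hB0
              · exact mul_le_mul hε1 (hfb _).2.1 (abs_nonneg _) zero_le_one
        _ = B*T0 := by ring
      have e2 : |f (ε*(t+q)) * (1/(2*Real.sqrt t))| ≤ B := by
        rw [abs_mul, abs_of_nonneg (by positivity : (0:ℝ) ≤ 1/(2*Real.sqrt t))]
        calc |f (ε*(t+q))| * (1/(2*Real.sqrt t)) ≤ B * 1 := by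
              apply mul_le_mul (hfb _).1 _ (by positivity) hB0
              rw [div_le_one (by positivity)]
              linarith only [hst1]
        _ = B := mul_one B
      calc |ε * deriv f (ε*(t+q)) * Real.sqrt t + f (ε*(t+q)) * (1/(2*Real.sqrt t))|
          ≤ |ε * deriv f (ε*(t+q)) * Real.sqrt t| + |f (ε*(t+q)) * (1/(2*Real.sqrt t))| :=
            abs_add_le _ _
      _ ≤ B*T0 + B := add_le_add e1 e2
      _ ≤ 2*B*(T0+1) := by
          have hBT0 : (0:ℝ) ≤ B*T0 := mul_nonneg hB0 (by linarith only [hT01])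
          linarith only [hBT0, hB0]
    have hK2b : |ε^2 * deriv (deriv f) (ε*(t+q)) * Real.sqrt t
        + ε * deriv f (ε*(t+q)) * (1/Real.sqrt t)
        - f (ε*(t+q)) * (1/(4*t*Real.sqrt t))| ≤ 2*B*(T0+1) := by
      have e1 : |ε^2 * deriv (deriv f) (ε*(t+q)) * Real.sqrt t| ≤ B*T0 := by
        rw [abs_mul, abs_mul, abs_of_nonneg (sq_nonneg ε), abs_of_nonneg (Real.sqrt_nonneg t)]
        have hε2 : ε^2 ≤ 1 := by
          have h := mul_le_mul hε1 hε1 hε0.le zero_le_one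
          nlinarith only [h]
        calc ε^2 * |deriv (deriv f) (ε*(t+q))| * Real.sqrt t
            ≤ 1 * B * T0 := by
              apply mul_le_mul _ hsqt_le (Real.sqrt_nonneg _)
              · exact mul_nonneg (by linarith only [hB0]) hB0
              · exact mul_le_mul hε2 (hfb _).2.2 (abs_nonneg _) zero_le_one
        _ = B*T0 := by ring
      have e2 : |ε * deriv f (ε*(t+q)) * (1/Real.sqrt t)| ≤ B := by
        rw [abs_mul, abs_mul, abs_of_nonneg hε0.le,
          abs_of_nonneg (by positivity : (0:ℝ) ≤ 1/Real.sqrt t)]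
        calc ε * |deriv f (ε*(t+q))| * (1/Real.sqrt t) ≤ 1 * B * 1 := by
              apply mul_le_mul _ _ (by positivity) (by linarith only [hB0])
              · exact mul_le_mul hε1 (hfb _).2.1 (abs_nonneg _) zero_le_one
              · rw [div_le_one (by positivity)]; linarith only [hst1]
        _ = B := by ring
      have e3 : |f (ε*(t+q)) * (1/(4*t*Real.sqrt t))| ≤ B := by
        rw [abs_mul, abs_of_nonneg (by positivity : (0:ℝ) ≤ 1/(4*t*Real.sqrt t))]
        calc |f (ε*(t+q))| * (1/(4*t*Real.sqrt t)) ≤ B * 1 := by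
              apply mul_le_mul (hfb _).1 _ (by positivity) hB0
              rw [div_le_one (by positivity)]
              nlinarith only [ht, hst1]
        _ = B := mul_one B
      calc |ε^2 * deriv (deriv f) (ε*(t+q)) * Real.sqrt t
          + ε * deriv f (ε*(t+q)) * (1/Real.sqrt t)
          - f (ε*(t+q)) * (1/(4*t*Real.sqrt t))|
          ≤ |ε^2 * deriv (deriv f) (ε*(t+q)) * Real.sqrt t
              + ε * deriv f (ε*(t+q)) * (1/Real.sqrt t)|
            + |f (ε*(t+q)) * (1/(4*t*Real.sqrt t))| := abs_sub _ _
      _ ≤ |ε^2 * deriv (deriv f) (ε*(t+q)) * Real.sqrt t|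
            + |ε * deriv f (ε*(t+q)) * (1/Real.sqrt t)|
            + |f (ε*(t+q)) * (1/(4*t*Real.sqrt t))| := by
            linarith only [abs_add_le (ε^2 * deriv (deriv f) (ε*(t+q)) * Real.sqrt t)
              (ε * deriv f (ε*(t+q)) * (1/Real.sqrt t))]
      _ ≤ B*T0 + B + B := add_le_add (add_le_add e1 e2) e3
      _ ≤ 2*B*(T0+1) := by
          have hBT0 : (0:ℝ) ≤ B*T0 := mul_nonneg hB0 (by linarith only [hT01])
          linarith only [hBT0, hB0]
    have hCSfin : CS ≤ (CL1 + CM + CS + 1) * (T0^2+1) * (1/(t*Real.sqrt t)) := by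
      have htst : t * Real.sqrt t ≤ T0^2 := by
        have h2 : t ≤ T0 := by rw [hT0def]; linarith only [hsmall]
        nlinarith only [h2, hsqt_le, Real.sqrt_nonneg t, ht, hst1]
      rw [mul_one_div, le_div_iff₀ (by positivity)]
      have h1 : CS * (t * Real.sqrt t) ≤ CS * T0^2 :=
        mul_le_mul_of_nonneg_left htst hCS0
      have hx1 : 0 ≤ (CL1+CM+1) * T0^2 :=
        mul_nonneg (by linarith only [hCL10, hCM0]) (sq_nonneg T0)
      linarith only [h1, hx1, hCL10, hCM0, hCS0]
    refine ⟨?_, ?_, ?_⟩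
    · rw [I0]
      refine le_trans (abs_sub _ _) ?_
      refine le_trans (add_le_add (hsum_small _ (fun j => hbφ0 _)) hKb) ?_
      rw [← hCSdef]
      exact hCSfin
    · rw [I1]
      refine le_trans (abs_sub _ _) ?_
      refine le_trans (add_le_add (hsum_small _ (fun j => hbφ1 _)) hK1b) ?_
      rw [← hCSdef]
      exact hCSfin
    · rw [I2]
      refine le_trans (abs_sub _ _) ?_
      refine le_trans (add_le_add (hsum_small _ (fun j => hbφ2 _)) hK2b) ?_
      rw [← hCSdef]
      exact hCSfin
end

section
/- There exists a constant C > 0 such that for every ε ∈ (0, 1] and every b ≥ ε, ∑_{j ∈ ℕ, (εj)²/2 ≤ b − ε} ε · (b − (εj)²/2)^{−1/2} ≤ C, where the sum runs over all nonnegative integers j with (εj)²/2 ≤ b − ε. -/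
/-- Core telescoping estimate: if `ε ≤ a` and `a * s ≤ 2 * t`, then
`ε / √t ≤ (3√2/√s) (√(a+ε) − √a)`. -/
lemma stmt_12_aux (ε a s t : ℝ) (hε0 : 0 < ε) (hεa : ε ≤ a) (hs0 : 0 < s) (ht0 : 0 < t)
    (hts : a * s ≤ 2 * t) :
    ε / Real.sqrt t ≤ 3 * Real.sqrt 2 / Real.sqrt s *
      (Real.sqrt (a + ε) - Real.sqrt a) := by
  have ha0 : 0 < a := lt_of_lt_of_le hε0 hεa
  set A : ℝ := Real.sqrt a with hA
  set B : ℝ := Real.sqrt (a + ε) with hB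
  set S : ℝ := Real.sqrt s with hS
  set T : ℝ := Real.sqrt t with hT
  set R : ℝ := Real.sqrt 2 with hR
  have hA0 : 0 < A := Real.sqrt_pos.mpr ha0
  have hS0 : 0 < S := Real.sqrt_pos.mpr hs0
  have hT0 : 0 < T := Real.sqrt_pos.mpr ht0
  have hR0 : (0:ℝ) < R := Real.sqrt_pos.mpr (by norm_num)
  have hA2 : A^2 = a := Real.sq_sqrt ha0.le
  have hB2 : B^2 = a + ε := Real.sq_sqrt (by positivity)
  have hR2 : R^2 = 2 := Real.sq_sqrt (by norm_num)
  have hR1 : (1:ℝ) ≤ R := by nlinarith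
  have hRle2 : R ≤ 2 := by nlinarith
  have hBA : A ≤ B := Real.sqrt_le_sqrt (by linarith)
  have hAS : A * S ≤ R * T := by
    have h1 : Real.sqrt (a * s) ≤ Real.sqrt (2 * t) := Real.sqrt_le_sqrt hts
    rwa [Real.sqrt_mul ha0.le, Real.sqrt_mul (by norm_num : (0:ℝ) ≤ 2)] at h1
  have hBRA : B ≤ R * A := by
    have h1 : Real.sqrt (a + ε) ≤ Real.sqrt (2 * a) := Real.sqrt_le_sqrt (by linarith)
    rwa [Real.sqrt_mul (by norm_num : (0:ℝ) ≤ 2)] at h1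
  have hprod : (B - A) * (B + A) = ε := by
    have : (B - A) * (B + A) = B^2 - A^2 := by ring
    rw [this, hA2, hB2]; ring
  rw [div_mul_eq_mul_div, div_le_div_iff₀ hT0 hS0]
  -- goal : ε * S ≤ 3 * R * (B - A) * T
  have h2 : (B + A) * S ≤ (R + 1) * (A * S) := by
    have := mul_le_mul_of_nonneg_right hBRA hS0.le
    nlinarith
  have h3 : (R + 1) * (A * S) ≤ (R + 1) * (R * T) :=
    mul_le_mul_of_nonneg_left hAS (by linarith)
  have h4 : (R + 1) * (R * T) ≤ 3 * (R * T) := by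
    have hRT : 0 ≤ R * T := by positivity
    nlinarith
  have h5 : (B - A) * ((B + A) * S) ≤ (B - A) * (3 * (R * T)) :=
    mul_le_mul_of_nonneg_left (by linarith) (by linarith)
  calc ε * S = (B - A) * ((B + A) * S) := by rw [← hprod]; ring
    _ ≤ (B - A) * (3 * (R * T)) := h5
    _ = 3 * R * (B - A) * T := by ring

/-- The Riemann-sum estimate `∑_{(εj)²/2 ≤ b − ε} ε (b − (εj)²/2)^{−1/2} ≤ C`,
uniformly in `ε ∈ (0,1]` and `b ≥ ε`. -/
theorem stmt_12 : ∃ C > 0, ∀ ε ∈ Set.Ioc (0:ℝ) 1, ∀ b : ℝ, ε ≤ b →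
    ∑' j : ℕ, (if (ε * (j : ℝ)) ^ 2 / 2 ≤ b - ε
        then ε * (b - (ε * (j : ℝ)) ^ 2 / 2) ^ (-(1:ℝ)/2) else 0) ≤ C := by
  refine ⟨7, by norm_num, ?_⟩
  rintro ε ⟨hε0, hε1⟩ b hb
  have hb0 : 0 < b := lt_of_lt_of_le hε0 hb
  set s : ℝ := Real.sqrt (2*b) with hs
  have hs0 : 0 < s := Real.sqrt_pos.mpr (by linarith)
  have hs2 : s^2 = 2*b := Real.sq_sqrt (by linarith)
  have hεs : ε ≤ s := by
    have h1 : ε = Real.sqrt (ε^2) := (Real.sqrt_sq hε0.le).symm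
    rw [h1]
    apply Real.sqrt_le_sqrt
    nlinarith
  set f : ℕ → ℝ := fun j => if (ε * (j : ℝ)) ^ 2 / 2 ≤ b - ε
        then ε * (b - (ε * (j : ℝ)) ^ 2 / 2) ^ (-(1:ℝ)/2) else 0 with hf
  set v : ℕ → ℝ := fun j => Real.sqrt (s + ε - ε * j) with hv
  set N : ℕ := ⌈s/ε⌉₊ with hN
  set K : ℕ := N - 1 with hK
  set c : ℝ := 3 * Real.sqrt 2 / Real.sqrt s with hc
  have hc0 : 0 ≤ c := by positivity
  have hvmono : ∀ j : ℕ, v (j+1) ≤ v j := by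
    intro j
    apply Real.sqrt_le_sqrt
    push_cast
    linarith
  -- pointwise bound
  have hpt : ∀ j : ℕ, f j ≤ c * (v j - v (j+1)) + (if j = K then 1 else 0) := by
    intro j
    have hgnn : 0 ≤ c * (v j - v (j+1)) :=
      mul_nonneg hc0 (by linarith [hvmono j])
    have hif : (0:ℝ) ≤ if j = K then (1:ℝ) else 0 := by positivity
    by_cases hcond : (ε * (j : ℝ)) ^ 2 / 2 ≤ b - ε
    · set x : ℝ := ε * j with hx
      have hx0 : 0 ≤ x := by positivity
      set t : ℝ := b - x^2/2 with ht
      have htε : ε ≤ t := by rw [ht]; linarith [hcond]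
      have ht0 : 0 < t := lt_of_lt_of_le hε0 htε
      have hxs : x < s := by
        have h1 : x^2 < s^2 := by rw [hs2]; linarith
        exact lt_of_pow_lt_pow_left₀ 2 hs0.le h1
      have hT0 : 0 < Real.sqrt t := Real.sqrt_pos.mpr ht0
      have hfj : f j = ε / Real.sqrt t := by
        rw [hf]
        simp only [if_pos (show (ε * (j:ℝ)) ^ 2 / 2 ≤ b - ε from hcond)]
        rw [show (-(1:ℝ)/2) = -(1/2) by ring, Real.rpow_neg ht0.le,
          ← Real.sqrt_eq_rpow, div_eq_mul_inv]
      by_cases hedge : s - x < ε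
      · -- edge case : at most this single index, and its term is ≤ 1
        have hjK : j = K := by
          have h1 : N ≤ j + 1 := by
            rw [hN]
            apply Nat.ceil_le.mpr
            rw [div_le_iff₀ hε0]
            push_cast
            rw [hx] at hedge
            linarith
          have h2 : j < N := by
            rw [hN]
            apply Nat.lt_ceil.mpr
            rw [lt_div_iff₀ hε0]
            rw [hx] at hxs
            linarith
          omega
        have hle1 : f j ≤ 1 := by
          rw [hfj]
          have h1 : Real.sqrt ε ≤ Real.sqrt t := Real.sqrt_le_sqrt htε
          have h2 : ε / Real.sqrt t ≤ ε / Real.sqrt ε := by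
            gcongr
          have h3 : ε / Real.sqrt ε = Real.sqrt ε := Real.div_sqrt
          have h4 : Real.sqrt ε ≤ 1 := by
            rw [show (1:ℝ) = Real.sqrt 1 by simp]
            exact Real.sqrt_le_sqrt hε1
          linarith
        rw [if_pos hjK]
        linarith
      · -- good case : telescoping bound
        push_neg at hedge
        set a : ℝ := s - x with ha
        have ha0 : 0 < a := lt_of_lt_of_le hε0 hedge
        have hvj : v j = Real.sqrt (a + ε) := by
          have he : s + ε - ε * (j:ℝ) = a + ε := by rw [ha, hx]; ring
          simp only [hv]
          rw [he]
        have hvj1 : v (j+1) = Real.sqrt a := by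
          have he : s + ε - ε * ((j:ℝ) + 1) = a := by rw [ha, hx]; ring
          simp only [hv]
          push_cast
          rw [he]
        have h2t : 2*t = a*s + a*x := by
          rw [ht, ha]
          linear_combination -hs2
        have hts : a * s ≤ 2 * t := by
          have h1 : 0 ≤ a * x := mul_nonneg ha0.le hx0
          linarith
        have hmain := stmt_12_aux ε a s t hε0 hedge hs0 ht0 hts
        rw [hfj, hvj, hvj1, hc]
        linarith
    · rw [hf]
      simp only [if_neg hcond]
      linarith
  -- finite support
  have hsupp : ∀ j ∉ Finset.range (N+1), f j = 0 := by
    intro j hj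
    rw [Finset.mem_range, not_lt] at hj
    rw [hf]
    apply if_neg
    push_neg
    have h1 : s / ε ≤ (N:ℝ) := Nat.le_ceil _
    have h1' : s ≤ (N:ℝ) * ε := by rwa [div_le_iff₀ hε0] at h1
    have h2 : (N:ℝ) + 1 ≤ (j:ℝ) := by exact_mod_cast hj
    have h3 : s < ε * j := by
      have h4 : ε * ((N:ℝ) + 1) ≤ ε * j := mul_le_mul_of_nonneg_left h2 hε0.le
      nlinarith
    have h5 : s^2 < (ε * j)^2 := by
      apply pow_lt_pow_left₀ h3 hs0.le
      norm_num
    rw [hs2] at h5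
    linarith
  rw [tsum_eq_sum hsupp]
  have hv0 : v 0 ≤ Real.sqrt 2 * Real.sqrt s := by
    have h1 : v 0 = Real.sqrt (s + ε) := by simp only [hv]; norm_num
    have h2 : Real.sqrt (s + ε) ≤ Real.sqrt (2 * s) := Real.sqrt_le_sqrt (by linarith)
    rw [h1]
    rwa [Real.sqrt_mul (by norm_num : (0:ℝ) ≤ 2)] at h2
  have hvN : 0 ≤ v (N+1) := Real.sqrt_nonneg _
  have hv00 : 0 ≤ v 0 := Real.sqrt_nonneg _
  have hSne : Real.sqrt s ≠ 0 := ne_of_gt (Real.sqrt_pos.mpr hs0)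
  calc ∑ j ∈ Finset.range (N+1), f j
      ≤ ∑ j ∈ Finset.range (N+1), (c * (v j - v (j+1)) + (if j = K then 1 else 0)) :=
        Finset.sum_le_sum (fun j _ => hpt j)
    _ = c * (v 0 - v (N+1)) + ∑ j ∈ Finset.range (N+1), (if j = K then (1:ℝ) else 0) := by
        rw [Finset.sum_add_distrib, ← Finset.mul_sum, Finset.sum_range_sub']
    _ ≤ c * v 0 + 1 := by
        have h1 : c * (v 0 - v (N+1)) ≤ c * v 0 :=
          mul_le_mul_of_nonneg_left (by linarith) hc0
        have h2 : ∑ j ∈ Finset.range (N+1), (if j = K then (1:ℝ) else 0) ≤ 1 := by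
          rw [Finset.sum_ite_eq' (Finset.range (N+1)) K (fun _ => (1:ℝ))]
          split_ifs <;> norm_num
        linarith
    _ ≤ 7 := by
        have h1 : c * v 0 ≤ c * (Real.sqrt 2 * Real.sqrt s) :=
          mul_le_mul_of_nonneg_left hv0 hc0
        have h2 : c * (Real.sqrt 2 * Real.sqrt s) = 6 := by
          rw [hc]
          field_simp
          have h3 : Real.sqrt 2 * Real.sqrt 2 = 2 := Real.mul_self_sqrt (by norm_num)
          linear_combination 3 * h3
        linarith
end

section
/- Let h, R : ℝ → ℝ be Lebesgue integrable functions, both even (h(−u) = h(u) and R(−t) = R(t) for a.e. u, t), with ∫_ℝ h(u) du = 1 and ∫_ℝ R(t) dt = 1. Define Υ(r) := ∫_ℝ h(u) (∫_u^{u+r} R(t) dt) du for r ∈ ℝ. Then Υ(0) = 0, lim_{r → +∞} Υ(r) = 1/2, and lim_{r → −∞} Υ(r) = −1/2. -/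
open MeasureTheory Set Filter Topology

/-- Properties of the DTB function `Υ(r) = ∫ h(u) ∫_u^{u+r} R(t) dt du` for even,
integrable, normalized `h` and `R`: it vanishes at `0` and tends to `±1/2` at `±∞`. -/
theorem stmt_17 (h R : ℝ → ℝ)
    (hh_int : Integrable h) (hR_int : Integrable R)
    (hh_even : ∀ᵐ u ∂(volume : Measure ℝ), h (-u) = h u)
    (hR_even : ∀ᵐ t ∂(volume : Measure ℝ), R (-t) = R t)
    (hh_norm : (∫ u, h u) = 1) (hR_norm : (∫ t, R t) = 1) :
    (∫ u, h u * ∫ t in u..(u + 0), R t) = 0 ∧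
    Filter.Tendsto (fun r : ℝ => ∫ u, h u * ∫ t in u..(u + r), R t)
      Filter.atTop (nhds (1/2)) ∧
    Filter.Tendsto (fun r : ℝ => ∫ u, h u * ∫ t in u..(u + r), R t)
      Filter.atBot (nhds (-(1/2))) := by
  have hRii : ∀ a b : ℝ, IntervalIntegrable R volume a b :=
    fun a b => hR_int.intervalIntegrable
  set I : ℝ := ∫ t, |R t| with hI
  set F : ℝ → ℝ := fun u => ∫ t in Ioi u, R t with hF
  set G : ℝ → ℝ := fun u => ∫ t in Iic u, R t with hG
  -- continuity of the primitive
  have hprim : Continuous (fun u : ℝ => ∫ t in (0:ℝ)..u, R t) :=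
    intervalIntegral.continuous_primitive hRii 0
  have hGcont : Continuous G := by
    have : ∀ u : ℝ, (∫ t in Iic u, R t)
        = (∫ t in Iic (0:ℝ), R t) + ∫ t in (0:ℝ)..u, R t := by
      intro u
      rw [← intervalIntegral.integral_Iic_sub_Iic (hR_int.integrableOn) (hR_int.integrableOn)]
      ring
    rw [hG, show (fun u : ℝ => ∫ t in Iic u, R t)
        = fun u => (∫ t in Iic (0:ℝ), R t) + ∫ t in (0:ℝ)..u, R t from funext this]
    exact continuous_const.add hprim
  have hFG : ∀ u, G u + F u = 1 := by
    intro u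
    rw [hF, hG]
    simpa using
      (intervalIntegral.integral_Iic_add_Ioi (hR_int.integrableOn) (hR_int.integrableOn)).trans hR_norm
  have hFcont : Continuous F := by
    have : ∀ u, F u = 1 - G u := fun u => by linarith [hFG u]
    rw [show F = fun u => 1 - G u from funext this]
    exact continuous_const.sub hGcont
  -- bounds
  have habsF : ∀ u, |F u| ≤ I := by
    intro u
    calc |F u| ≤ ∫ t in Ioi u, |R t| := by
          simpa [Real.norm_eq_abs] using
            norm_integral_le_integral_norm (f := R) (μ := volume.restrict (Ioi u))
      _ ≤ I := setIntegral_le_integral hR_int.abs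
            (Filter.Eventually.of_forall fun t => abs_nonneg _)
  have habsG : ∀ u, |G u| ≤ I := by
    intro u
    calc |G u| ≤ ∫ t in Iic u, |R t| := by
          simpa [Real.norm_eq_abs] using
            norm_integral_le_integral_norm (f := R) (μ := volume.restrict (Iic u))
      _ ≤ I := setIntegral_le_integral hR_int.abs
            (Filter.Eventually.of_forall fun t => abs_nonneg _)
  -- integrability of the limit integrands
  have hFint : Integrable (fun u => h u * F u) := by
    have := hh_int.bdd_mul (c := I) (hFcont.aestronglyMeasurable) (Filter.Eventually.of_forall fun u => by
      simpa [Real.norm_eq_abs] using habsF u)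
    exact this.congr (Filter.Eventually.of_forall fun u => mul_comm _ _)
  have hGint : Integrable (fun u => h u * G u) := by
    have := hh_int.bdd_mul (c := I) (hGcont.aestronglyMeasurable) (Filter.Eventually.of_forall fun u => by
      simpa [Real.norm_eq_abs] using habsG u)
    exact this.congr (Filter.Eventually.of_forall fun u => mul_comm _ _)
  -- symmetry: ∫ h F = ∫ h G
  have hFnegG : ∀ u, F (-u) = ∫ t in Iic u, R (-t) := by
    intro u
    show (∫ t in Ioi (-u), R t) = ∫ t in Iic u, R (-t)
    rw [integral_comp_neg_Iic]
  have hsym : (∫ u, h u * F u) = ∫ u, h u * G u := by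
    have e1 : (∫ u, h u * F u) = ∫ u, h (-u) * F (-u) :=
      (integral_neg_eq_self (fun u => h u * F u) (volume : Measure ℝ)).symm
    rw [e1]
    apply integral_congr_ae
    have hReven' : ∀ᵐ u ∂(volume : Measure ℝ), F (-u) = G u := by
      have : ∀ u, F (-u) = G u := by
        intro u
        rw [hFnegG u, hG]
        apply setIntegral_congr_ae measurableSet_Iic
        filter_upwards [hR_even] with t ht
        exact fun _ => ht
      exact Filter.Eventually.of_forall this
    filter_upwards [hh_even, hReven'] with u h1 h2
    rw [h1, h2]
  -- the two halves
  have hsum : (∫ u, h u * F u) + (∫ u, h u * G u) = 1 := by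
    rw [← integral_add hFint hGint]
    calc (∫ u, h u * F u + h u * G u) = ∫ u, h u := by
          apply integral_congr_ae
          apply Filter.Eventually.of_forall
          intro u
          show h u * F u + h u * G u = h u
          rw [← mul_add, add_comm (F u) (G u), hFG u, mul_one]
      _ = 1 := hh_norm
  have hFhalf : (∫ u, h u * F u) = 1/2 := by
    rw [hsym] at hsum ⊢
    linarith [hsum]
  have hGhalf : (∫ u, h u * G u) = 1/2 := by rw [← hsym]; exact hFhalf
  -- bound for dominated convergence
  set bound : ℝ → ℝ := fun u => |h u| * I with hbound
  have hbound_int : Integrable bound := hh_int.abs.mul_const I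
  have hFmeas : ∀ r : ℝ, AEStronglyMeasurable (fun u => h u * ∫ t in u..(u + r), R t)
      (volume : Measure ℝ) := by
    intro r
    apply hh_int.aestronglyMeasurable.mul
    have : Continuous (fun u : ℝ => ∫ t in u..(u + r), R t) := by
      have : ∀ u : ℝ, (∫ t in u..(u + r), R t)
          = (∫ t in (0:ℝ)..(u + r), R t) - ∫ t in (0:ℝ)..u, R t := by
        intro u
        rw [intervalIntegral.integral_interval_sub_left (hRii 0 (u+r)) (hRii 0 u)]
      rw [show (fun u : ℝ => ∫ t in u..(u + r), R t)
          = fun u => (∫ t in (0:ℝ)..(u + r), R t) - ∫ t in (0:ℝ)..u, R t from funext this]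
      exact (hprim.comp (continuous_id.add continuous_const)).sub hprim
    exact this.aestronglyMeasurable
  have hbnd : ∀ r : ℝ, ∀ᵐ u ∂(volume : Measure ℝ),
      ‖h u * ∫ t in u..(u + r), R t‖ ≤ bound u := by
    intro r
    apply Filter.Eventually.of_forall
    intro u
    rw [norm_mul, Real.norm_eq_abs, Real.norm_eq_abs]
    apply mul_le_mul_of_nonneg_left _ (abs_nonneg _)
    calc |∫ t in u..(u + r), R t| ≤ ∫ t in Set.uIoc u (u+r), |R t| := by
          simpa [Real.norm_eq_abs] using
            intervalIntegral.norm_integral_le_integral_norm_uIoc (f := R) (a := u)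
              (b := u + r) (μ := volume)
      _ ≤ I := setIntegral_le_integral hR_int.abs
            (Filter.Eventually.of_forall fun t => abs_nonneg _)
  refine ⟨?_, ?_, ?_⟩
  · simp
  · have := tendsto_integral_filter_of_dominated_convergence (μ := (volume : Measure ℝ))
      (l := (atTop : Filter ℝ)) (F := fun r u => h u * ∫ t in u..(u + r), R t)
      (f := fun u => h u * F u) bound
      (Filter.Eventually.of_forall hFmeas)
      (Filter.Eventually.of_forall hbnd) hbound_int ?_
    · rwa [hFhalf] at this
    · apply Filter.Eventually.of_forall
      intro u
      apply Tendsto.const_mul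
      exact intervalIntegral_tendsto_integral_Ioi u (hR_int.integrableOn)
        (tendsto_atTop_add_const_left _ u tendsto_id)
  · have := tendsto_integral_filter_of_dominated_convergence (μ := (volume : Measure ℝ))
      (l := (atBot : Filter ℝ)) (F := fun r u => h u * ∫ t in u..(u + r), R t)
      (f := fun u => h u * (-(G u))) bound
      (Filter.Eventually.of_forall hFmeas)
      (Filter.Eventually.of_forall hbnd) hbound_int ?_
    · have e : (∫ u, h u * (-(G u))) = -(1/2) := by
        rw [← hGhalf, ← integral_neg]
        congr 1
        funext u
        ring
      rwa [e] at this
    · apply Filter.Eventually.of_forall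
      intro u
      apply Tendsto.const_mul
      have h1 : Tendsto (fun r : ℝ => ∫ t in (u + r)..u, R t) atBot (𝓝 (G u)) :=
        intervalIntegral_tendsto_integral_Iic u (hR_int.integrableOn)
          (tendsto_atBot_add_const_left _ u tendsto_id)
      have h2 : ∀ r : ℝ, (∫ t in u..(u + r), R t) = -(∫ t in (u + r)..u, R t) := by
        intro r
        rw [intervalIntegral.integral_symm]
      rw [show (fun r : ℝ => ∫ t in u..(u + r), R t)
          = fun r => -(∫ t in (u + r)..u, R t) from funext h2]
      exact h1.neg
end

section
/- Let a > 0 and κ > 0. The function λ ↦ (a + κ|λ|³)^{−1} is Lebesgue integrable on ℝ, and the function R : ℝ → ℂ defined by R(t) := ∫_ℝ e^{−iλt} (a + κ|λ|³)^{−1} dλ is real-valued, even, continuous, and Lebesgue integrable on ℝ. -/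
open MeasureTheory Real Complex Filter FourierTransform

/-- The inverse Fourier transform `R(t) = ∫ e^{−iλt} (a + κ|λ|³)^{−1} dλ`. -/
noncomputable def Rker (a κ : ℝ) (t : ℝ) : ℂ :=
  ∫ lam : ℝ, Complex.exp (-Complex.I * (lam : ℂ) * (t : ℂ)) / ((a + κ * |lam| ^ 3 : ℝ) : ℂ)

namespace Stmt18Aux


lemma hasDerivAt_abs_cube (x : ℝ) : HasDerivAt (fun y : ℝ => |y| ^ 3) (3 * x * |x|) x := by
  have heq : (fun y : ℝ => |y| ^ 3) = fun y : ℝ => (y ^ 2) ^ ((3 : ℝ)/2) := by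
    funext y
    rw [← _root_.sq_abs, ← Real.rpow_natCast |y| 2, ← Real.rpow_mul (abs_nonneg y),
      ← Real.rpow_natCast |y| 3]
    norm_num
  have h1 : HasDerivAt (fun y : ℝ => (y ^ 2) ^ ((3:ℝ)/2))
      (((3:ℝ)/2 * (x ^ 2) ^ ((3:ℝ)/2 - 1)) * (2 * x ^ 1)) x :=
    by
      have := (Real.hasDerivAt_rpow_const (x := x ^ 2) (p := (3:ℝ)/2) (Or.inr (by norm_num))).comp x
        (hasDerivAt_pow 2 x)
      exact this.congr_deriv (by norm_num)
  rw [heq]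
  convert h1 using 1
  have : ((x:ℝ) ^ 2) ^ ((3:ℝ)/2 - 1) = |x| := by
    rw [show (3:ℝ)/2 - 1 = 1/2 by norm_num, ← Real.sqrt_eq_rpow, Real.sqrt_sq_eq_abs]
  rw [this]; ring

lemma hasDerivAt_mul_abs (x : ℝ) : HasDerivAt (fun y : ℝ => y * |y|) (2 * |x|) x := by
  rcases lt_trichotomy x 0 with hx | hx | hx
  · have h : HasDerivAt (fun y : ℝ => -(y ^ 2)) (-(2 * x ^ 1)) x := (hasDerivAt_pow 2 x).neg
    have he : (fun y : ℝ => y * |y|) =ᶠ[nhds x] fun y : ℝ => -(y ^ 2) := by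
      filter_upwards [Iio_mem_nhds hx] with y hy
      rw [abs_of_neg hy]; ring
    have := h.congr_of_eventuallyEq he
    refine this.congr_deriv ?_
    rw [abs_of_neg hx]; ring
  · subst hx
    rw [hasDerivAt_iff_tendsto_slope]
    have h1 : Tendsto (fun y : ℝ => |y|) (nhdsWithin (0:ℝ) {(0:ℝ)}ᶜ) (nhds (2 * |(0:ℝ)|)) := by
      have : Tendsto (fun y : ℝ => |y|) (nhds (0:ℝ)) (nhds |(0:ℝ)|) :=
        _root_.continuous_abs.tendsto 0
      simpa using this.mono_left nhdsWithin_le_nhds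
    refine h1.congr' ?_
    filter_upwards [self_mem_nhdsWithin] with y hy
    have hy' : y ≠ 0 := hy
    simp [slope_def_field]
    field_simp
  · have h : HasDerivAt (fun y : ℝ => y ^ 2) (2 * x ^ 1) x := hasDerivAt_pow 2 x
    have he : (fun y : ℝ => y * |y|) =ᶠ[nhds x] fun y : ℝ => y ^ 2 := by
      filter_upwards [Ioi_mem_nhds hx] with y hy
      rw [abs_of_pos hy]; ring
    have := h.congr_of_eventuallyEq he
    refine this.congr_deriv ?_
    rw [abs_of_pos hx]; ring




noncomputable def F (a κ : ℝ) (x : ℝ) : ℝ := (a + κ * |x| ^ 3)⁻¹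
noncomputable def F1 (a κ : ℝ) (x : ℝ) : ℝ := -(3 * κ * (x * |x|)) * F a κ x ^ 2
noncomputable def F2 (a κ : ℝ) (x : ℝ) : ℝ :=
  -(3 * κ * (2 * |x|)) * F a κ x ^ 2 + -(3 * κ * (x * |x|)) * (2 * F a κ x * F1 a κ x)

variable {a κ : ℝ}

lemma gpos (ha : 0 < a) (hκ : 0 < κ) (x : ℝ) : 0 < a + κ * |x| ^ 3 := by positivity

lemma Fpos (ha : 0 < a) (hκ : 0 < κ) (x : ℝ) : 0 < F a κ x :=
  inv_pos.2 (gpos ha hκ x)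

lemma hasDerivAt_F (ha : 0 < a) (hκ : 0 < κ) (x : ℝ) :
    HasDerivAt (F a κ) (F1 a κ x) x := by
  have hg : HasDerivAt (fun y : ℝ => a + κ * |y| ^ 3) (κ * (3 * x * |x|)) x :=
    ((hasDerivAt_abs_cube x).const_mul κ).const_add a
  have := hg.inv (ne_of_gt (gpos ha hκ x))
  refine this.congr_deriv ?_
  simp only [F, F1, div_eq_mul_inv, inv_pow]
  ring

lemma hasDerivAt_F1 (ha : 0 < a) (hκ : 0 < κ) (x : ℝ) :
    HasDerivAt (F1 a κ) (F2 a κ x) x := by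
  have hu : HasDerivAt (fun y : ℝ => -(3 * κ * (y * |y|))) (-(3 * κ * (2 * |x|))) x :=
    ((hasDerivAt_mul_abs x).const_mul (3 * κ)).neg
  have hv : HasDerivAt (fun y : ℝ => F a κ y ^ 2) (2 * F a κ x ^ 1 * F1 a κ x) x :=
    (hasDerivAt_F ha hκ x).pow 2
  have := hu.mul hv
  refine this.congr_deriv ?_
  simp only [F2, pow_one]

/-- The master constant. -/
noncomputable def Cval (a κ : ℝ) : ℝ := (2 * κ + 2 * a) / (a * κ)

lemma Cval_pos (ha : 0 < a) (hκ : 0 < κ) : 0 < Cval a κ := by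
  unfold Cval; positivity

lemma key (ha : 0 < a) (hκ : 0 < κ) (x : ℝ) :
    1 + x ^ 2 ≤ Cval a κ * (a + κ * |x| ^ 3) := by
  unfold Cval
  rw [div_mul_eq_mul_div, le_div_iff₀ (by positivity)]
  rcases le_total |x| 1 with h | h
  · have h2 : x ^ 2 ≤ 1 := by nlinarith [_root_.sq_abs x, abs_nonneg x]
    have h3 : (0:ℝ) ≤ κ * |x| ^ 3 := by positivity
    nlinarith [mul_pos ha hκ, mul_nonneg (mul_pos ha hκ).le (sub_nonneg.2 h2),
      mul_nonneg ha.le h3, mul_nonneg hκ.le h3, sq_nonneg a]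
  · have h2 : 1 ≤ x ^ 2 := by nlinarith [_root_.sq_abs x]
    have h3 : |x| ^ 2 ≤ |x| ^ 3 := pow_le_pow_right₀ h (by norm_num)
    have h4 : x ^ 2 ≤ |x| ^ 3 := by rw [← _root_.sq_abs x] at h2 ⊢; linarith
    nlinarith [mul_pos ha hκ, mul_nonneg (mul_pos ha hκ).le (sub_nonneg.2 h4),
      mul_nonneg hκ.le (mul_nonneg hκ.le (pow_nonneg (abs_nonneg x) 3)), sq_nonneg a,
      mul_nonneg ha.le ha.le]

lemma Fle (ha : 0 < a) (hκ : 0 < κ) (x : ℝ) :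
    F a κ x ≤ Cval a κ * (1 + x ^ 2)⁻¹ := by
  unfold F
  rw [← div_eq_mul_inv, le_div_iff₀ (by positivity), inv_mul_eq_div,
    div_le_iff₀ (gpos ha hκ x)]
  exact key ha hκ x

lemma contF (ha : 0 < a) (hκ : 0 < κ) : Continuous (F a κ) := by
  apply Continuous.inv₀
  · continuity
  · exact fun x => ne_of_gt (gpos ha hκ x)

lemma contF1 (ha : 0 < a) (hκ : 0 < κ) : Continuous (F1 a κ) := by
  unfold F1
  have := contF ha hκ
  continuity

lemma integrable_of_le (D : ℝ) {f : ℝ → ℝ} (hm : AEStronglyMeasurable f volume)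
    (h : ∀ x, ‖f x‖ ≤ D * (1 + x ^ 2)⁻¹) : Integrable f :=
  (integrable_inv_one_add_sq.const_mul D).mono' hm (ae_of_all _ h)

lemma hux (x : ℝ) : x ^ 2 * (1 + x ^ 2)⁻¹ ≤ 1 := by
  rw [← div_eq_mul_inv, div_le_one (by positivity)]
  linarith [sq_nonneg x]

lemma huabs (x : ℝ) : |x| * (1 + x ^ 2)⁻¹ ≤ 1 := by
  rw [← div_eq_mul_inv, div_le_one (by positivity)]
  nlinarith [sq_nonneg (|x| - 1), _root_.sq_abs x]

lemma F_integrable (ha : 0 < a) (hκ : 0 < κ) : Integrable (F a κ) := by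
  refine integrable_of_le (Cval a κ) (contF ha hκ).aestronglyMeasurable fun x => ?_
  rw [Real.norm_eq_abs, abs_of_pos (Fpos ha hκ x)]
  exact Fle ha hκ x

lemma habs2 (x : ℝ) : _root_.abs (x * _root_.abs x) = x ^ 2 := by
  rw [abs_mul, _root_.abs_abs, ← _root_.sq_abs x]; ring

lemma F1_abs (ha : 0 < a) (hκ : 0 < κ) (x : ℝ) :
    |F1 a κ x| = 3 * κ * x ^ 2 * F a κ x ^ 2 := by
  have h : F1 a κ x = -(3 * κ * (x * |x|) * F a κ x ^ 2) := by rw [F1]; ring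
  rw [h, abs_neg, abs_mul, abs_mul, abs_mul, habs2, abs_of_pos hκ,
    _root_.abs_of_nonneg (sq_nonneg (F a κ x))]
  norm_num

lemma F1_le (ha : 0 < a) (hκ : 0 < κ) (x : ℝ) :
    |F1 a κ x| ≤ (3 * κ * Cval a κ ^ 2) * (1 + x ^ 2)⁻¹ := by
  rw [F1_abs ha hκ x]
  have hF2 : F a κ x ^ 2 ≤ (Cval a κ * (1 + x ^ 2)⁻¹) ^ 2 :=
    pow_le_pow_left₀ (Fpos ha hκ x).le (Fle ha hκ x) 2
  calc 3 * κ * x ^ 2 * F a κ x ^ 2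
      ≤ 3 * κ * x ^ 2 * (Cval a κ * (1 + x ^ 2)⁻¹) ^ 2 := by
        apply mul_le_mul_of_nonneg_left hF2 (by positivity)
    _ = (3 * κ * Cval a κ ^ 2 * (1 + x ^ 2)⁻¹) * (x ^ 2 * (1 + x ^ 2)⁻¹) := by ring
    _ ≤ (3 * κ * Cval a κ ^ 2 * (1 + x ^ 2)⁻¹) * 1 := by
        apply mul_le_mul_of_nonneg_left (hux x) (by positivity)
    _ = 3 * κ * Cval a κ ^ 2 * (1 + x ^ 2)⁻¹ := mul_one _

lemma F1_integrable (ha : 0 < a) (hκ : 0 < κ) : Integrable (F1 a κ) :=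
  integrable_of_le _ (contF1 ha hκ).aestronglyMeasurable (F1_le ha hκ)

lemma F2_le (ha : 0 < a) (hκ : 0 < κ) (x : ℝ) :
    |F2 a κ x| ≤ (6 * κ * Cval a κ ^ 2 + 18 * κ ^ 2 * Cval a κ ^ 3) * (1 + x ^ 2)⁻¹ := by
  set u := (1 + x ^ 2)⁻¹ with hu
  have hu0 : 0 < u := by rw [hu]; positivity
  have hFle := Fle ha hκ x
  have hF0 := (Fpos ha hκ x).le
  have hC0 := (Cval_pos ha hκ).le
  have h1 : |(-(3 * κ * (2 * |x|)) * F a κ x ^ 2)| ≤ 6 * κ * Cval a κ ^ 2 * u := by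
    rw [abs_mul, abs_neg, _root_.abs_of_nonneg (by positivity : (0:ℝ) ≤ 3 * κ * (2 * |x|)),
      _root_.abs_of_nonneg (sq_nonneg (F a κ x))]
    have hF2 : F a κ x ^ 2 ≤ (Cval a κ * u) ^ 2 := pow_le_pow_left₀ hF0 hFle 2
    calc 3 * κ * (2 * |x|) * F a κ x ^ 2
        ≤ 3 * κ * (2 * |x|) * (Cval a κ * u) ^ 2 := by
          apply mul_le_mul_of_nonneg_left hF2 (by positivity)
      _ = (6 * κ * Cval a κ ^ 2 * u) * (|x| * u) := by ring
      _ ≤ (6 * κ * Cval a κ ^ 2 * u) * 1 := by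
          apply mul_le_mul_of_nonneg_left (huabs x) (by positivity)
      _ = 6 * κ * Cval a κ ^ 2 * u := mul_one _
  have h2 : |(-(3 * κ * (x * |x|)) * (2 * F a κ x * F1 a κ x))| ≤
      18 * κ ^ 2 * Cval a κ ^ 3 * u := by
    have e1 : |(-(3 * κ * (x * |x|)) * (2 * F a κ x * F1 a κ x))| =
        3 * κ * x ^ 2 * (2 * F a κ x * |F1 a κ x|) := by
      rw [abs_mul, abs_neg, abs_mul, abs_mul, habs2, abs_of_pos hκ,
        abs_mul, abs_mul, _root_.abs_of_nonneg hF0]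
      norm_num
    rw [e1, F1_abs ha hκ x]
    have hF3 : F a κ x ^ 3 ≤ (Cval a κ * u) ^ 3 := pow_le_pow_left₀ hF0 hFle 3
    have hx4 : (x ^ 2 * u) ^ 2 ≤ 1 := by
      have := hux x
      nlinarith [mul_nonneg (sq_nonneg x) hu0.le]
    calc 3 * κ * x ^ 2 * (2 * F a κ x * (3 * κ * x ^ 2 * F a κ x ^ 2))
        = 18 * κ ^ 2 * x ^ 4 * F a κ x ^ 3 := by ring
      _ ≤ 18 * κ ^ 2 * x ^ 4 * (Cval a κ * u) ^ 3 := by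
          apply mul_le_mul_of_nonneg_left hF3 (by positivity)
      _ = (18 * κ ^ 2 * Cval a κ ^ 3 * u) * ((x ^ 2 * u) ^ 2) := by ring
      _ ≤ (18 * κ ^ 2 * Cval a κ ^ 3 * u) * 1 := by
          apply mul_le_mul_of_nonneg_left hx4 (by positivity)
      _ = 18 * κ ^ 2 * Cval a κ ^ 3 * u := mul_one _
  calc |F2 a κ x| ≤ _ + _ := abs_add_le _ _
    _ ≤ 6 * κ * Cval a κ ^ 2 * u + 18 * κ ^ 2 * Cval a κ ^ 3 * u := add_le_add h1 h2
    _ = (6 * κ * Cval a κ ^ 2 + 18 * κ ^ 2 * Cval a κ ^ 3) * u := by ring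

lemma contF2 (ha : 0 < a) (hκ : 0 < κ) : Continuous (F2 a κ) := by
  unfold F2
  have h1 := contF ha hκ
  have h2 := contF1 ha hκ
  continuity

lemma F2_integrable (ha : 0 < a) (hκ : 0 < κ) : Integrable (F2 a κ) :=
  integrable_of_le _ (contF2 ha hκ).aestronglyMeasurable (F2_le ha hκ)

variable {a κ : ℝ}















noncomputable def fC (a κ : ℝ) (x : ℝ) : ℂ := (F a κ x : ℂ)

lemma fC_integrable (ha : 0 < a) (hκ : 0 < κ) : Integrable (fC a κ) :=
  (F_integrable ha hκ).ofReal

lemma hasDerivAt_fC (ha : 0 < a) (hκ : 0 < κ) (x : ℝ) :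
    HasDerivAt (fC a κ) ((F1 a κ x : ℂ)) x :=
  (hasDerivAt_F ha hκ x).ofReal_comp

lemma deriv_fC (ha : 0 < a) (hκ : 0 < κ) :
    deriv (fC a κ) = fun x => (F1 a κ x : ℂ) :=
  funext fun x => (hasDerivAt_fC ha hκ x).deriv

lemma deriv2_fC (ha : 0 < a) (hκ : 0 < κ) :
    deriv (deriv (fC a κ)) = fun x => (F2 a κ x : ℂ) := by
  rw [deriv_fC ha hκ]
  exact funext fun x => ((hasDerivAt_F1 ha hκ x).ofReal_comp).deriv

lemma fourier_second (ha : 0 < a) (hκ : 0 < κ) :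
    𝓕 (deriv (deriv (fC a κ))) =
      fun x : ℝ => (2 * π * I * x) • ((2 * π * I * x) • 𝓕 (fC a κ) x) := by
  have hf1 : Integrable (deriv (fC a κ)) := by
    rw [deriv_fC ha hκ]; exact (F1_integrable ha hκ).ofReal
  have hf2 : Integrable (deriv (deriv (fC a κ))) := by
    rw [deriv2_fC ha hκ]; exact (F2_integrable ha hκ).ofReal
  have hd1 : Differentiable ℝ (fC a κ) := fun x => (hasDerivAt_fC ha hκ x).differentiableAt
  have hd2 : Differentiable ℝ (deriv (fC a κ)) := by
    rw [deriv_fC ha hκ]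
    exact fun x => ((hasDerivAt_F1 ha hκ x).ofReal_comp).differentiableAt
  have A2 := Real.fourier_deriv hf1 hd2 hf2
  have A1 := Real.fourier_deriv (fC_integrable ha hκ) hd1 hf1
  rw [A2, A1]

lemma norm_two_pi_I_x (x : ℝ) : ‖(2 * ↑π * I * (x:ℂ))‖ = 2 * π * |x| := by
  simp [map_mul, abs_of_pos Real.pi_pos]

lemma fourier_decay (ha : 0 < a) (hκ : 0 < κ) {x : ℝ} (hx : x ≠ 0) :
    ‖𝓕 (fC a κ) x‖ ≤ (∫ y : ℝ, ‖deriv (deriv (fC a κ)) y‖) / (4 * π ^ 2 * x ^ 2) := by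
  have h : ‖𝓕 (deriv (deriv (fC a κ))) x‖ ≤ ∫ y : ℝ, ‖deriv (deriv (fC a κ)) y‖ :=
    VectorFourier.norm_fourierIntegral_le_integral_norm 𝐞 volume (innerₗ ℝ)
      (deriv (deriv (fC a κ))) x
  rw [fourier_second ha hκ] at h
  rw [norm_smul, norm_smul, norm_two_pi_I_x] at h
  have hxx : (2 * π * |x|) * (2 * π * |x| * ‖𝓕 (fC a κ) x‖) =
      (4 * π ^ 2 * x ^ 2) * ‖𝓕 (fC a κ) x‖ := by
    have hsq : |x| * |x| = x ^ 2 := by rw [← _root_.sq_abs x]; ring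
    linear_combination (4 * π ^ 2 * ‖𝓕 (fC a κ) x‖) * hsq
  rw [le_div_iff₀ (by positivity)]
  calc ‖𝓕 (fC a κ) x‖ * (4 * π ^ 2 * x ^ 2) = (2 * π * |x|) * (2 * π * |x| * ‖𝓕 (fC a κ) x‖) := by
        rw [hxx]; ring
    _ ≤ _ := h



variable {a κ : ℝ}

lemma fourier_cont (ha : 0 < a) (hκ : 0 < κ) : Continuous (𝓕 (fC a κ)) :=
  VectorFourier.fourierIntegral_continuous Real.continuous_fourierChar
    (by exact continuous_inner) (fC_integrable ha hκ)

lemma fourier_integrable (ha : 0 < a) (hκ : 0 < κ) : Integrable (𝓕 (fC a κ)) := by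
  set M0 := ∫ y : ℝ, ‖fC a κ y‖ with hM0
  set M2 := ∫ y : ℝ, ‖deriv (deriv (fC a κ)) y‖ with hM2
  have hM0nn : 0 ≤ M0 := integral_nonneg fun y => norm_nonneg _
  have hM2nn : 0 ≤ M2 := integral_nonneg fun y => norm_nonneg _
  have hbound0 : ∀ x : ℝ, ‖𝓕 (fC a κ) x‖ ≤ M0 := fun x =>
    VectorFourier.norm_fourierIntegral_le_integral_norm 𝐞 volume (innerₗ ℝ) (fC a κ) x
  have hpi : (3:ℝ) < π := by
    have := Real.pi_gt_three
    linarith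
  have hD : ∀ x : ℝ, ‖‖𝓕 (fC a κ) x‖‖ ≤ (2 * M0 + 2 * M2) * (1 + x ^ 2)⁻¹ := by
    intro x
    rw [norm_norm]
    rcases le_total |x| 1 with h | h
    · have h2 : x ^ 2 ≤ 1 := by nlinarith [_root_.sq_abs x, abs_nonneg x]
      have hu : (2:ℝ)⁻¹ ≤ (1 + x ^ 2)⁻¹ := by
        apply inv_anti₀ (by positivity)
        linarith
      calc ‖𝓕 (fC a κ) x‖ ≤ M0 := hbound0 x
        _ ≤ (2 * M0 + 2 * M2) * 2⁻¹ := by linarith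
        _ ≤ (2 * M0 + 2 * M2) * (1 + x ^ 2)⁻¹ := by
            apply mul_le_mul_of_nonneg_left hu (by linarith)
    · have hx : x ≠ 0 := by
        intro h0; rw [h0] at h; simp at h; linarith
      have h2 : 1 ≤ x ^ 2 := by nlinarith [_root_.sq_abs x]
      calc ‖𝓕 (fC a κ) x‖ ≤ M2 / (4 * π ^ 2 * x ^ 2) := fourier_decay ha hκ hx
        _ ≤ (2 * M0 + 2 * M2) * (1 + x ^ 2)⁻¹ := by
            rw [div_le_iff₀ (by positivity), ← div_eq_mul_inv, div_mul_eq_mul_div,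
              le_div_iff₀ (by positivity)]
            have h3 : 1 + x ^ 2 ≤ 2 * x ^ 2 := by linarith
            have h4 : (1:ℝ) ≤ π ^ 2 := by nlinarith
            nlinarith [mul_le_mul_of_nonneg_left h3 hM2nn,
              mul_nonneg hM0nn (mul_nonneg (sq_nonneg π) (sq_nonneg x)),
              mul_nonneg (mul_nonneg hM2nn (sub_nonneg.2 h4)) (sq_nonneg x)]
  have : Integrable (fun x : ℝ => ‖𝓕 (fC a κ) x‖) :=
    integrable_of_le _ ((fourier_cont ha hκ).norm.aestronglyMeasurable) hD
  exact (integrable_norm_iff (fourier_cont ha hκ).aestronglyMeasurable).mp this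



variable {a κ : ℝ}

lemma Rker_eq (t : ℝ) : Rker a κ t = 𝓕 (fC a κ) (t / (2 * π)) := by
  unfold Rker
  rw [Real.fourier_eq']
  refine integral_congr_ae (Eventually.of_forall fun v => ?_)
  simp only [RCLike.inner_apply, conj_trivial, smul_eq_mul, fC, F]
  rw [show (-2 * π * (t / (2 * π) * v) : ℝ) = -(v * t) by
    field_simp]
  rw [Complex.ofReal_neg, Complex.ofReal_mul, Complex.ofReal_inv, div_eq_mul_inv]
  congr 2
  push_cast
  ring

lemma Rker_even (t : ℝ) : Rker a κ (-t) = Rker a κ t := by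
  unfold Rker
  rw [← integral_neg_eq_self (fun lam : ℝ =>
    Complex.exp (-Complex.I * (lam : ℂ) * ((-t : ℝ) : ℂ)) / ((a + κ * |lam| ^ 3 : ℝ) : ℂ))]
  refine integral_congr_ae (Eventually.of_forall fun v => ?_)
  simp only [abs_neg]
  congr 1
  push_cast
  ring_nf

lemma Rker_real (t : ℝ) : (Rker a κ t).im = 0 := by
  rw [← Complex.conj_eq_iff_im]
  have h1 : (starRingEnd ℂ) (Rker a κ t) = Rker a κ (-t) := by
    unfold Rker
    rw [← integral_conj]
    refine integral_congr_ae (Eventually.of_forall fun v => ?_)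
    dsimp only
    rw [map_div₀, ← Complex.exp_conj, Complex.conj_ofReal]
    congr 2
    simp only [map_mul, Complex.conj_I, Complex.conj_ofReal, map_neg]
    push_cast
    ring
  rw [h1, Rker_even]


end Stmt18Aux

open Stmt18Aux in
/-- For `a, κ > 0` the function `λ ↦ (a + κ|λ|³)^{−1}` is integrable, and its inverse
Fourier transform `R(t) = ∫ e^{−iλt}(a + κ|λ|³)^{−1} dλ` is real-valued, even,
continuous, and integrable. -/
theorem stmt_18 (a κ : ℝ) (ha : 0 < a) (hκ : 0 < κ) :
    MeasureTheory.Integrable (fun lam : ℝ => (a + κ * |lam| ^ 3)⁻¹) ∧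
    (∀ t : ℝ, (Rker a κ t).im = 0) ∧
    (∀ t : ℝ, Rker a κ (-t) = Rker a κ t) ∧
    Continuous (Rker a κ) ∧
    MeasureTheory.Integrable (Rker a κ) := by
  have hRk : Rker a κ = fun t => 𝓕 (fC a κ) (t / (2 * π)) := funext fun t => Rker_eq t
  refine ⟨F_integrable ha hκ, fun t => Rker_real t, fun t => Rker_even t, ?_, ?_⟩
  · rw [hRk]
    exact (fourier_cont ha hκ).comp (continuous_id.div_const _)
  · rw [hRk]
    simp_rw [div_eq_mul_inv]
    exact (fourier_integrable ha hκ).comp_mul_right'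
      (inv_ne_zero (by positivity : (0:ℝ) < 2 * π).ne')
end

section
/- There exists a constant C > 0 such that for every r ∈ (0, 1/2], the function s ↦ |ln|s| − ln|s − r|| is Lebesgue integrable on [−1, 1] and ∫_{−1}^{1} |ln|s| − ln|s − r|| ds ≤ C r log(1/r). -/
open MeasureTheory Set intervalIntegral

/-- `log` is interval integrable on `[0, c]` for `c ≥ 0`. -/
lemma logII0 {c : ℝ} (hc : 0 ≤ c) : IntervalIntegrable Real.log volume 0 c := by
  rw [intervalIntegrable_iff, uIoc_of_le hc]
  have hg : IntegrableOn (fun x : ℝ => 2 * x ^ (-(1/2) : ℝ) + c) (Ioc 0 c) volume := by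
    have h1 : IntervalIntegrable (fun x : ℝ => 2 * x ^ (-(1/2) : ℝ) + c) volume 0 c :=
      ((intervalIntegrable_rpow' (by norm_num : (-1:ℝ) < -(1/2))).const_mul 2).add
        intervalIntegrable_const
    rw [intervalIntegrable_iff, uIoc_of_le hc] at h1
    exact h1
  refine Integrable.mono hg Real.measurable_log.aestronglyMeasurable ?_
  filter_upwards [ae_restrict_mem measurableSet_Ioc] with x hx
  obtain ⟨hx0, hxc⟩ := hx
  rw [Real.norm_eq_abs, Real.norm_eq_abs]
  have hpow : (0:ℝ) < x ^ (-(1/2) : ℝ) := Real.rpow_pos_of_pos hx0 _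
  have habs : |2 * x ^ (-(1/2) : ℝ) + c| = 2 * x ^ (-(1/2) : ℝ) + c := by
    rw [abs_of_nonneg]; nlinarith [hx0.trans_le hxc]
  rw [habs]
  rcases le_or_gt x 1 with hx1 | hx1
  · have hlogle : Real.log x ≤ 0 := Real.log_nonpos hx0.le hx1
    rw [abs_of_nonpos hlogle]
    have h2 : Real.log (x ^ (-(1/2) : ℝ)) = -(1/2) * Real.log x := Real.log_rpow hx0 _
    have h3 : Real.log (x ^ (-(1/2) : ℝ)) ≤ x ^ (-(1/2) : ℝ) - 1 :=
      Real.log_le_sub_one_of_pos hpow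
    nlinarith [hx0.trans_le hxc]
  · have hlogpos : 0 ≤ Real.log x := Real.log_nonneg hx1.le
    rw [abs_of_nonneg hlogpos]
    have h3 : Real.log x ≤ x - 1 := Real.log_le_sub_one_of_pos hx0
    nlinarith

/-- `log` is interval integrable on any interval. -/
lemma logII (a b : ℝ) : IntervalIntegrable Real.log volume a b := by
  have key : ∀ c : ℝ, IntervalIntegrable Real.log volume 0 c := by
    intro c
    rcases le_or_gt 0 c with hc | hc
    · exact logII0 hc
    · have h1 : IntervalIntegrable Real.log volume 0 (-c) := logII0 (by linarith)
      have h2 : IntervalIntegrable (fun x => Real.log (-x)) volume (-0) (-(-c)) :=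
        (IntervalIntegrable.iff_comp_neg (f := Real.log)).mp h1
      have h3 : (fun x => Real.log (-x)) = Real.log := by
        funext x; exact Real.log_neg_eq_log x
      rw [h3] at h2
      simpa using h2
  exact ((key a).symm).trans (key b)

/-- Evaluation of `∫₀ᶜ log` for `c ≥ 0`. -/
lemma logEval0 {c : ℝ} (hc : 0 ≤ c) :
    ∫ x in (0:ℝ)..c, Real.log x = c * Real.log c - c := by
  rcases eq_or_lt_of_le hc with rfl | hc'
  · simp
  have hcont : ContinuousOn (fun x : ℝ => x * Real.log x - x) (Icc 0 c) :=
    (Real.continuous_mul_log.sub continuous_id).continuousOn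
  have hderiv : ∀ x ∈ Ioo (0:ℝ) c,
      HasDerivWithinAt (fun x : ℝ => x * Real.log x - x) (Real.log x) (Ioi x) x := by
    intro x hx
    have h1 : HasDerivAt (fun x : ℝ => x * Real.log x - x) (Real.log x + 1 - 1) x :=
      (Real.hasDerivAt_mul_log (ne_of_gt hx.1)).sub (hasDerivAt_id x)
    simpa using h1.hasDerivWithinAt
  have := integral_eq_sub_of_hasDeriv_right_of_le hc hcont hderiv (logII 0 c)
  simpa using this

/-- Evaluation of `∫₀ᶜ log` for all `c`. -/
lemma logEval (c : ℝ) : ∫ x in (0:ℝ)..c, Real.log x = c * Real.log c - c := by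
  rcases le_or_gt 0 c with hc | hc
  · exact logEval0 hc
  · have h1 : (∫ x in (0:ℝ)..c, Real.log x) = ∫ x in (0:ℝ)..c, Real.log (-x) := by
      simp [Real.log_neg_eq_log]
    rw [h1, intervalIntegral.integral_comp_neg]
    rw [show -(0:ℝ) = 0 by norm_num, intervalIntegral.integral_symm,
      logEval0 (by linarith : (0:ℝ) ≤ -c)]
    rw [show Real.log (-c) = Real.log c from Real.log_neg_eq_log c]
    ring

/-- Evaluation of `∫ₐᵇ log`. -/
lemma logEvalAB (a b : ℝ) :
    ∫ x in a..b, Real.log x = (b * Real.log b - b) - (a * Real.log a - a) := by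
  have h := intervalIntegral.integral_add_adjacent_intervals (logII a 0) (logII 0 b)
  rw [intervalIntegral.integral_symm] at h
  rw [← h, logEval a, logEval b]
  ring

/-- Logarithmic integral estimate: `∫_{−1}^{1} |ln|s| − ln|s − r|| ds ≤ C r log(1/r)`
uniformly in `r ∈ (0, 1/2]`. -/
theorem stmt_19 : ∃ C > 0, ∀ r ∈ Set.Ioc (0:ℝ) (1/2),
    MeasureTheory.IntegrableOn
      (fun s => abs (Real.log (abs s) - Real.log (abs (s - r)))) (Set.Icc (-1) 1) ∧
    (∫ s in Set.Icc (-1:ℝ) 1, abs (Real.log (abs s) - Real.log (abs (s - r))))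
      ≤ C * r * Real.log (1 / r) := by
  refine ⟨10, by norm_num, ?_⟩
  intro r hr
  obtain ⟨hr0, hr2⟩ := hr
  -- remove the inner absolute values using `Real.log_abs`
  simp only [Real.log_abs]
  set h : ℝ → ℝ := fun s => Real.log s - Real.log (s - r) with hh
  -- integrability of h and |h| on any interval
  have hshift : ∀ a b : ℝ, IntervalIntegrable (fun s => Real.log (s - r)) volume a b := by
    intro a b
    have := (logII (a - r) (b - r)).comp_sub_right r
    simpa using this
  have hII : ∀ a b : ℝ, IntervalIntegrable h volume a b := fun a b =>
    (logII a b).sub (hshift a b)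
  have hIabs : ∀ a b : ℝ, IntervalIntegrable (fun s => |h s|) volume a b := fun a b =>
    (hII a b).abs
  constructor
  · exact (intervalIntegrable_iff_integrableOn_Icc_of_le (by norm_num : (-1:ℝ) ≤ 1)).1
      (hIabs (-1) 1)
  -- a.e. facts
  have hae : ∀ᵐ s : ℝ, s ≠ 0 ∧ s ≠ r := by
    have h0 : ∀ᵐ s : ℝ, s ≠ 0 := by
      rw [MeasureTheory.ae_iff]
      have hs : {a : ℝ | ¬ a ≠ 0} = {0} := by ext x; simp
      rw [hs]; exact measure_singleton 0
    have h1 : ∀ᵐ s : ℝ, s ≠ r := by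
      rw [MeasureTheory.ae_iff]
      have hs : {a : ℝ | ¬ a ≠ r} = {r} := by ext x; simp
      rw [hs]; exact measure_singleton r
    exact h0.and h1
  -- sign of h on the two pieces
  have e1 : (∫ s in (-1:ℝ)..(r/2), |h s|) = -(∫ s in (-1:ℝ)..(r/2), h s) := by
    rw [← intervalIntegral.integral_neg]
    refine intervalIntegral.integral_congr_ae ?_
    filter_upwards [hae] with s hs hsmem
    obtain ⟨hs0, hsr⟩ := hs
    rw [Set.uIoc_of_le (by linarith : (-1:ℝ) ≤ r/2)] at hsmem
    obtain ⟨_, hsle⟩ := hsmem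
    have habsle : |s| ≤ |s - r| := by
      have hsq : s^2 ≤ (s - r)^2 := by nlinarith
      exact sq_le_sq.1 hsq
    have hlog : Real.log s ≤ Real.log (s - r) := by
      rw [← Real.log_abs s, ← Real.log_abs (s - r)]
      exact Real.log_le_log (abs_pos.2 hs0) habsle
    simp only [hh]
    rw [abs_of_nonpos (by linarith)]
  have e2 : (∫ s in (r/2:ℝ)..1, |h s|) = ∫ s in (r/2:ℝ)..1, h s := by
    refine intervalIntegral.integral_congr_ae ?_
    filter_upwards [hae] with s hs hsmem
    obtain ⟨hs0, hsr⟩ := hs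
    rw [Set.uIoc_of_le (by linarith : (r/2:ℝ) ≤ 1)] at hsmem
    obtain ⟨hsgt, _⟩ := hsmem
    have habsle : |s - r| ≤ |s| := by
      have hsq : (s - r)^2 ≤ s^2 := by nlinarith
      exact sq_le_sq.1 hsq
    have hlog : Real.log (s - r) ≤ Real.log s := by
      rw [← Real.log_abs s, ← Real.log_abs (s - r)]
      exact Real.log_le_log (abs_pos.2 (sub_ne_zero.2 hsr)) habsle
    simp only [hh]
    rw [abs_of_nonneg (by linarith)]
  -- expand the two interval integrals of h
  have hexp : ∀ a b : ℝ, (∫ s in a..b, h s)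
      = ((b * Real.log b - b) - (a * Real.log a - a))
        - (((b - r) * Real.log (b - r) - (b - r)) - ((a - r) * Real.log (a - r) - (a - r))) := by
    intro a b
    simp only [hh]
    rw [intervalIntegral.integral_sub (logII a b) (hshift a b)]
    rw [intervalIntegral.integral_comp_sub_right Real.log r]
    rw [logEvalAB a b, logEvalAB (a - r) (b - r)]
  -- compute the full integral
  have key : (∫ s in Icc (-1:ℝ) 1, |h s|)
      = (1+r) * Real.log (1+r) - (1-r) * Real.log (1-r) - 2*r*Real.log (r/2) := by
    rw [MeasureTheory.integral_Icc_eq_integral_Ioc,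
      ← intervalIntegral.integral_of_le (by norm_num : (-1:ℝ) ≤ 1),
      ← intervalIntegral.integral_add_adjacent_intervals (hIabs (-1) (r/2)) (hIabs (r/2) 1),
      e1, e2, hexp, hexp]
    have l1 : Real.log (-1 : ℝ) = 0 := by
      rw [show (-1:ℝ) = -(1:ℝ) by norm_num, Real.log_neg_eq_log]; simp
    have l2 : Real.log (-1 - r) = Real.log (1 + r) := by
      rw [show (-1:ℝ) - r = -(1 + r) by ring, Real.log_neg_eq_log]
    have l3 : Real.log (r/2 - r) = Real.log (r/2) := by
      rw [show r/2 - r = -(r/2) by ring, Real.log_neg_eq_log]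
    rw [l1, l2, l3]
    simp only [Real.log_one]
    ring
  rw [key]
  -- the final elementary inequality
  have hlog1p : Real.log (1+r) ≤ r := by
    have := Real.log_le_sub_one_of_pos (by linarith : (0:ℝ) < 1+r); linarith
  have hlog1m : -Real.log (1-r) ≤ 2*r := by
    have hpos : (0:ℝ) < 1 - r := by linarith
    have hinv : Real.log ((1-r)⁻¹) ≤ (1-r)⁻¹ - 1 :=
      Real.log_le_sub_one_of_pos (by positivity)
    rw [Real.log_inv] at hinv
    have hmul : (1-r) * (1-r)⁻¹ = 1 := mul_inv_cancel₀ (ne_of_gt hpos)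
    nlinarith [inv_pos.2 hpos]
  have hlogr2 : Real.log (r/2) = Real.log r - Real.log 2 :=
    Real.log_div (ne_of_gt hr0) two_ne_zero
  have hloginv : Real.log (1/r) = -Real.log r := by rw [one_div, Real.log_inv]
  have hlog2le : Real.log 2 ≤ Real.log (1/r) := by
    apply Real.log_le_log (by norm_num)
    rw [le_div_iff₀ hr0]; linarith
  have l2lb : (0.6931471803 : ℝ) < Real.log 2 := Real.log_two_gt_d9
  have l2ub : Real.log 2 < (0.6931471808 : ℝ) := Real.log_two_lt_d9
  have A : (1+r) * Real.log (1+r) ≤ (1+r) * r :=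
    mul_le_mul_of_nonneg_left hlog1p (by linarith)
  have B : (1-r) * (-Real.log (1-r)) ≤ (1-r) * (2*r) :=
    mul_le_mul_of_nonneg_left hlog1m (by linarith)
  have D : (8*r) * Real.log 2 ≤ (8*r) * Real.log (1/r) :=
    mul_le_mul_of_nonneg_left hlog2le (by linarith)
  nlinarith [mul_pos hr0 (lt_trans (by norm_num : (0:ℝ) < 0.6931471803) l2lb),
    mul_le_mul_of_nonneg_left l2ub.le (by linarith : (0:ℝ) ≤ 2*r)]
end
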